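/- arXiv:2109.07643 — 4 statements merged into one kernel-verified Lean document; each statement's English description precedes it below -/
import Mathlib

section
/- Let H and M be n×n real Metzler matrices such that H is Hurwitz and -M H⁻¹ is Metzler. Then M is Hurwitz if and only if -M H⁻¹ is Hurwitz. -/
open Matrix

/-- A square real matrix is *Metzler* if all its off-diagonal entries are nonnegative. -/
def IsMetzler {n : ℕ} (A : Matrix (Fin n) (Fin n) ℝ) : Prop :=
  ∀ i j, i ≠ j → 0 ≤ A i j

/-- A square real matrix is *Hurwitz* if every complex eigenvalue has negative real part. -/
def IsHurwitz {n : ℕ} (A : Matrix (Fin n) (Fin n) ℝ) : Prop :=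
  ∀ μ ∈ spectrum ℂ (A.map Complex.ofReal), μ.re < 0

/-- The spectral radius of a square real matrix: the maximum modulus of its complex
eigenvalues. -/
noncomputable def specRad {n : ℕ} (A : Matrix (Fin n) (Fin n) ℝ) : ℝ :=
  sSup {x : ℝ | ∃ μ ∈ spectrum ℂ (A.map Complex.ofReal), x = ‖μ‖}


namespace MHuW

open Filter Topology

variable {n : ℕ}

lemma pow_entry_nonneg (C : Matrix (Fin n) (Fin n) ℝ) (hC : ∀ i j, 0 ≤ C i j) :
    ∀ k i j, 0 ≤ (C ^ k) i j := by
  intro k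
  induction k with
  | zero =>
    intro i j
    rw [pow_zero]
    by_cases h : i = j <;> simp [Matrix.one_apply, h]
  | succ k ih =>
    intro i j
    rw [pow_succ, Matrix.mul_apply]
    exact Finset.sum_nonneg fun l _ => mul_nonneg (ih i l) (hC l j)

lemma pow_entry_le (C : Matrix (Fin n) (Fin n) ℝ) (hC : ∀ i j, 0 ≤ C i j) {q : ℝ}
    (hq : ∀ i, ∑ j, C i j ≤ q) (hq0 : 0 ≤ q) :
    ∀ k i j, (C ^ k) i j ≤ q ^ k := by
  intro k
  induction k with
  | zero =>
    intro i j
    rw [pow_zero]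
    by_cases h : i = j <;> simp [Matrix.one_apply, h]
  | succ k ih =>
    intro i j
    rw [pow_succ', Matrix.mul_apply]
    calc ∑ l, C i l * (C ^ k) l j ≤ ∑ l, C i l * q ^ k := by
          refine Finset.sum_le_sum fun l _ => mul_le_mul_of_nonneg_left (ih l j) (hC i l)
      _ = (∑ l, C i l) * q ^ k := by rw [← Finset.sum_mul]
      _ ≤ q * q ^ k := mul_le_mul_of_nonneg_right (hq i) (pow_nonneg hq0 k)
      _ = q ^ (k + 1) := (pow_succ' q k).symm

lemma neumann (C : Matrix (Fin n) (Fin n) ℝ) (hC : ∀ i j, 0 ≤ C i j) {q : ℝ}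
    (hq : ∀ i, ∑ j, C i j ≤ q) (hq0 : 0 ≤ q) (hq1 : q < 1) :
    IsUnit (1 - C) ∧ ∀ i j, 0 ≤ (1 - C)⁻¹ i j := by
  have hsum : ∀ i j, Summable (fun k => (C ^ k) i j) := fun i j =>
    Summable.of_nonneg_of_le (fun k => pow_entry_nonneg C hC k i j)
      (fun k => pow_entry_le C hC hq hq0 k i j) (summable_geometric_of_lt_one hq0 hq1)
  set B : Matrix (Fin n) (Fin n) ℝ := Matrix.of (fun i j => ∑' k, (C ^ k) i j) with hB
  have hBnn : ∀ i j, 0 ≤ B i j := fun i j =>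
    tsum_nonneg (fun k => pow_entry_nonneg C hC k i j)
  have key : (1 - C) * B = 1 := by
    ext i j
    rw [Matrix.mul_apply]
    have h1 : ∀ l, (1 - C) i l * B l j = ∑' k, (1 - C) i l * (C ^ k) l j := fun l =>
      (tsum_mul_left).symm
    calc ∑ l, (1 - C) i l * B l j = ∑ l, ∑' k, (1 - C) i l * (C ^ k) l j := by
          exact Finset.sum_congr rfl fun l _ => h1 l
      _ = ∑' k, ∑ l, (1 - C) i l * (C ^ k) l j := by
          refine (Summable.tsum_finsetSum ?_).symm
          intro l _
          exact (hsum l j).mul_left _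
      _ = ∑' k, ((C ^ k) i j - (C ^ (k + 1)) i j) := by
          refine tsum_congr fun k => ?_
          have : ∑ l, (1 - C) i l * (C ^ k) l j = ((1 - C) * C ^ k) i j :=
            (Matrix.mul_apply).symm
          rw [this, Matrix.sub_mul, Matrix.one_mul, ← pow_succ']
          simp [Matrix.sub_apply]
      _ = (1 : Matrix (Fin n) (Fin n) ℝ) i j := by
          have hf : Summable (fun k => (C ^ k) i j) := hsum i j
          have hf1 : Summable (fun k => (C ^ (k + 1)) i j) :=
            ((summable_nat_add_iff (f := fun k => (C ^ k) i j) 1).2 hf)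
          rw [hf.tsum_sub hf1]
          have h0 : ∑' k, (C ^ k) i j = (C ^ 0) i j + ∑' k, (C ^ (k + 1)) i j :=
            hf.tsum_eq_zero_add
          rw [h0]
          simp
  refine ⟨((Matrix.isUnit_iff_isUnit_det _).2 (Matrix.isUnit_det_of_right_inverse key)), ?_⟩
  rw [Matrix.inv_eq_right_inv key]
  exact hBnn


lemma good_nonneg (hn : 0 < n) (N : Matrix (Fin n) (Fin n) ℝ) (hN : ∀ i j, 0 ≤ N i j) {s : ℝ}
    (hU : IsUnit (s • (1 : Matrix (Fin n) (Fin n) ℝ) - N))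
    (hinv : ∀ i j, 0 ≤ (s • (1 : Matrix (Fin n) (Fin n) ℝ) - N)⁻¹ i j) : 0 ≤ s := by
  by_contra hs
  push_neg at hs
  have h1 : (s • (1 : Matrix (Fin n) (Fin n) ℝ) - N) * (s • (1 : Matrix (Fin n) (Fin n) ℝ) - N)⁻¹ = 1 :=
    Matrix.mul_nonsing_inv _ ((Matrix.isUnit_iff_isUnit_det _).1 hU)
  set i : Fin n := ⟨0, hn⟩
  have h2 : ((s • (1 : Matrix (Fin n) (Fin n) ℝ) - N) * (s • (1 : Matrix (Fin n) (Fin n) ℝ) - N)⁻¹) i i = 1 := by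
    rw [h1, Matrix.one_apply_eq]
  rw [Matrix.mul_apply] at h2
  have h3 : ∀ l, (s • (1 : Matrix (Fin n) (Fin n) ℝ) - N) i l * (s • (1 : Matrix (Fin n) (Fin n) ℝ) - N)⁻¹ l i ≤ 0 := by
    intro l
    refine mul_nonpos_of_nonpos_of_nonneg ?_ (hinv l i)
    rw [Matrix.sub_apply, Matrix.smul_apply, smul_eq_mul]
    have h0 : (0:ℝ) ≤ (1 : Matrix (Fin n) (Fin n) ℝ) i l := by
      by_cases h : i = l <;> simp [Matrix.one_apply, h]
    nlinarith [hN i l, mul_nonpos_of_nonpos_of_nonneg hs.le h0]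
  have h4 : ∑ l, (s • (1 : Matrix (Fin n) (Fin n) ℝ) - N) i l * (s • (1 : Matrix (Fin n) (Fin n) ℝ) - N)⁻¹ l i ≤ 0 :=
    Finset.sum_nonpos fun l _ => h3 l
  linarith

lemma abs_le_of_good (N : Matrix (Fin n) (Fin n) ℝ) (hN : ∀ i j, 0 ≤ N i j) {s : ℝ}
    (hU : IsUnit (s • (1 : Matrix (Fin n) (Fin n) ℝ) - N))
    (hinv : ∀ i j, 0 ≤ (s • (1 : Matrix (Fin n) (Fin n) ℝ) - N)⁻¹ i j)
    {μ : ℂ} (hμ : μ ∈ spectrum ℂ (N.map Complex.ofReal)) : ‖μ‖ ≤ s := by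
  by_contra hlt
  push_neg at hlt
  rw [spectrum.mem_iff] at hμ
  have hdet : (algebraMap ℂ (Matrix (Fin n) (Fin n) ℂ) μ - N.map Complex.ofReal).det = 0 := by
    by_contra hd
    exact hμ ((Matrix.isUnit_iff_isUnit_det _).2 (isUnit_iff_ne_zero.2 hd))
  obtain ⟨u, hu0, hu⟩ := (Matrix.exists_mulVec_eq_zero_iff).2 hdet
  have hNu : (N.map Complex.ofReal) *ᵥ u = μ • u := by
    rw [Matrix.sub_mulVec, Algebra.algebraMap_eq_smul_one, Matrix.smul_mulVec,
      Matrix.one_mulVec, sub_eq_zero] at hu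
    exact hu.symm
  set w : Fin n → ℝ := fun i => ‖u i‖ with hw
  have hw0 : ∀ i, 0 ≤ w i := fun i => norm_nonneg _
  have hwne : ∃ i, 0 < w i := by
    by_contra h
    push_neg at h
    apply hu0
    funext i
    have hz : w i = 0 := le_antisymm (h i) (hw0 i)
    simpa [hw, norm_eq_zero] using hz
  have hkey : ∀ i, ‖μ‖ * w i ≤ ∑ j, N i j * w j := by
    intro i
    have h1 : ((N.map Complex.ofReal) *ᵥ u) i = ∑ j, (N i j : ℂ) * u j := by
      simp [Matrix.mulVec, dotProduct, Matrix.map_apply]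
    have h2 : ‖μ‖ * w i = ‖∑ j, (N i j : ℂ) * u j‖ := by
      rw [← h1, hNu]
      simp [hw, norm_mul]
    rw [h2]
    calc ‖∑ j, (N i j : ℂ) * u j‖ ≤ ∑ j, ‖(N i j : ℂ) * u j‖ :=
          norm_sum_le _ _
      _ = ∑ j, N i j * w j := Finset.sum_congr rfl fun j _ => by
          rw [norm_mul, Complex.norm_real, Real.norm_eq_abs, abs_of_nonneg (hN i j)]
  set R := (s • (1 : Matrix (Fin n) (Fin n) ℝ) - N)⁻¹ with hR
  have hRmul : R * (s • (1 : Matrix (Fin n) (Fin n) ℝ) - N) = 1 :=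
    Matrix.nonsing_inv_mul _ ((Matrix.isUnit_iff_isUnit_det _).1 hU)
  have hws : ∀ i, w i = ∑ l, R i l * ((s • (1 : Matrix (Fin n) (Fin n) ℝ) - N) *ᵥ w) l := by
    intro i
    have h5 : (R *ᵥ ((s • (1 : Matrix (Fin n) (Fin n) ℝ) - N) *ᵥ w)) i = w i := by
      rw [Matrix.mulVec_mulVec, hRmul, Matrix.one_mulVec]
    rw [← h5]
    simp [Matrix.mulVec, dotProduct]
  have hyl : ∀ l, ((s • (1 : Matrix (Fin n) (Fin n) ℝ) - N) *ᵥ w) l ≤ (s - ‖μ‖) * w l := by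
    intro l
    have h6 : ((s • (1 : Matrix (Fin n) (Fin n) ℝ) - N) *ᵥ w) l = s * w l - ∑ j, N l j * w j := by
      rw [Matrix.sub_mulVec, Matrix.smul_mulVec, Matrix.one_mulVec]
      simp [Matrix.mulVec, dotProduct]
    rw [h6]
    have := hkey l
    nlinarith [hkey l]
  obtain ⟨i, hi⟩ := hwne
  have h7 : w i ≤ (s - ‖μ‖) * ∑ l, R i l * w l := by
    rw [hws i]
    calc ∑ l, R i l * ((s • (1 : Matrix (Fin n) (Fin n) ℝ) - N) *ᵥ w) l
        ≤ ∑ l, R i l * ((s - ‖μ‖) * w l) :=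
          Finset.sum_le_sum fun l _ => mul_le_mul_of_nonneg_left (hyl l) (hinv i l)
      _ = (s - ‖μ‖) * ∑ l, R i l * w l := by
          rw [Finset.mul_sum]
          exact Finset.sum_congr rfl fun l _ => by ring
  have hRw : 0 ≤ ∑ l, R i l * w l :=
    Finset.sum_nonneg fun l _ => mul_nonneg (hinv i l) (hw0 l)
  nlinarith


lemma good_large (N : Matrix (Fin n) (Fin n) ℝ) (hN : ∀ i j, 0 ≤ N i j) {t : ℝ}
    (ht : (∑ i, ∑ j, N i j) + 1 ≤ t) :
    IsUnit (t • (1 : Matrix (Fin n) (Fin n) ℝ) - N) ∧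
      ∀ i j, 0 ≤ (t • (1 : Matrix (Fin n) (Fin n) ℝ) - N)⁻¹ i j := by
  have hS0 : 0 ≤ ∑ i, ∑ j, N i j :=
    Finset.sum_nonneg fun i _ => Finset.sum_nonneg fun j _ => hN i j
  have ht0 : 0 < t := by linarith
  set C : Matrix (Fin n) (Fin n) ℝ := t⁻¹ • N with hCdef
  have hC : ∀ i j, 0 ≤ C i j := fun i j => by
    rw [hCdef, Matrix.smul_apply, smul_eq_mul]
    exact mul_nonneg (inv_nonneg.2 ht0.le) (hN i j)
  have hrow : ∀ i, ∑ j, C i j ≤ t⁻¹ * (∑ i, ∑ j, N i j) := by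
    intro i
    have h1 : ∑ j, C i j = t⁻¹ * ∑ j, N i j := by
      rw [Finset.mul_sum]
      exact Finset.sum_congr rfl fun j _ => by rw [hCdef, Matrix.smul_apply, smul_eq_mul]
    rw [h1]
    refine mul_le_mul_of_nonneg_left ?_ (inv_nonneg.2 ht0.le)
    exact Finset.single_le_sum (f := fun i => ∑ j, N i j)
      (fun i _ => Finset.sum_nonneg fun j _ => hN i j) (Finset.mem_univ i)
  have hq0 : 0 ≤ t⁻¹ * (∑ i, ∑ j, N i j) := mul_nonneg (inv_nonneg.2 ht0.le) hS0
  have hq1 : t⁻¹ * (∑ i, ∑ j, N i j) < 1 := by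
    rw [inv_mul_lt_iff₀ ht0, mul_one]
    linarith
  obtain ⟨hU, hinv⟩ := neumann C hC hrow hq0 hq1
  have hfact : t • (1 : Matrix (Fin n) (Fin n) ℝ) - N = t • (1 - C) := by
    rw [smul_sub, hCdef, smul_smul, mul_inv_cancel₀ ht0.ne', one_smul]
  have hmul : (t • (1 : Matrix (Fin n) (Fin n) ℝ) - N) * (t⁻¹ • (1 - C)⁻¹) = 1 := by
    rw [hfact, Matrix.smul_mul, Matrix.mul_smul, smul_smul, mul_inv_cancel₀ ht0.ne', one_smul,
      Matrix.mul_nonsing_inv _ ((Matrix.isUnit_iff_isUnit_det _).1 hU)]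
  refine ⟨((Matrix.isUnit_iff_isUnit_det _).2 (Matrix.isUnit_det_of_right_inverse hmul)), ?_⟩
  rw [Matrix.inv_eq_right_inv hmul]
  intro i j
  rw [Matrix.smul_apply, smul_eq_mul]
  exact mul_nonneg (inv_nonneg.2 ht0.le) (hinv i j)


set_option maxHeartbeats 1000000 in
lemma pf_core (hn : 0 < n) (N : Matrix (Fin n) (Fin n) ℝ) (hN : ∀ i j, 0 ≤ N i j) :
    ∃ s₀ : ℝ, ∃ v : Fin n → ℝ, (∀ i, 0 ≤ v i) ∧ v ≠ 0 ∧ N *ᵥ v = s₀ • v ∧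
      (∀ μ ∈ spectrum ℂ (N.map Complex.ofReal), ‖μ‖ ≤ s₀) ∧
      (∀ s, s₀ < s → IsUnit (s • (1 : Matrix (Fin n) (Fin n) ℝ) - N) ∧
        ∀ i j, 0 ≤ (s • (1 : Matrix (Fin n) (Fin n) ℝ) - N)⁻¹ i j) := by
  classical
  set Good : ℝ → Prop := fun s => IsUnit (s • (1 : Matrix (Fin n) (Fin n) ℝ) - N) ∧
    ∀ i j, 0 ≤ (s • (1 : Matrix (Fin n) (Fin n) ℝ) - N)⁻¹ i j with hGood
  set G : Set ℝ := {s | ∀ t, s ≤ t → Good t} with hG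
  have hGne : ((∑ i, ∑ j, N i j) + 1) ∈ G := fun t ht => good_large N hN ht
  have hGlb : ∀ s ∈ G, 0 ≤ s := fun s hs =>
    good_nonneg hn N hN (hs s le_rfl).1 (hs s le_rfl).2
  set s₀ : ℝ := sInf G with hs₀
  have hbdd : BddBelow G := ⟨0, fun s hs => hGlb s hs⟩
  have hne : G.Nonempty := ⟨_, hGne⟩
  have hgood : ∀ s, s₀ < s → Good s := by
    intro s hs
    obtain ⟨g, hgG, hgs⟩ := exists_lt_of_csInf_lt hne hs
    exact hgG s hgs.le
  have habs : ∀ μ ∈ spectrum ℂ (N.map Complex.ofReal), ‖μ‖ ≤ s₀ := by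
    intro μ hμ
    by_contra hgt
    push_neg at hgt
    have hmid : s₀ < (s₀ + ‖μ‖) / 2 := by linarith
    obtain ⟨hU, hinv⟩ := hgood _ hmid
    have := abs_le_of_good N hN hU hinv hμ
    linarith
  -- the sequence of resolvents
  set t : ℕ → ℝ := fun k => s₀ + ((k : ℝ) + 1)⁻¹ with ht
  have htpos : ∀ k, s₀ < t k := fun k => by
    have : (0:ℝ) < ((k : ℝ) + 1)⁻¹ := by positivity
    simp only [ht]
    linarith
  have hgoodk : ∀ k, Good (t k) := fun k => hgood _ (htpos k)
  set T : ℕ → Matrix (Fin n) (Fin n) ℝ := fun k => ((t k) • (1 : Matrix (Fin n) (Fin n) ℝ) - N)⁻¹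
    with hT
  have hTnn : ∀ k i j, 0 ≤ T k i j := fun k => (hgoodk k).2
  have hTr : ∀ k, ((t k) • (1 : Matrix (Fin n) (Fin n) ℝ) - N) * T k = 1 := fun k =>
    Matrix.mul_nonsing_inv _ ((Matrix.isUnit_iff_isUnit_det _).1 (hgoodk k).1)
  have hTl : ∀ k, T k * ((t k) • (1 : Matrix (Fin n) (Fin n) ℝ) - N) = 1 := fun k =>
    Matrix.nonsing_inv_mul _ ((Matrix.isUnit_iff_isUnit_det _).1 (hgoodk k).1)
  have htmono : ∀ k l : ℕ, k ≤ l → t l ≤ t k := by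
    intro k l hkl
    simp only [ht]
    have h1 : ((k : ℝ) + 1) ≤ ((l : ℝ) + 1) := by
      have := (Nat.cast_le (α := ℝ)).2 hkl
      linarith
    have h2 : ((l : ℝ) + 1)⁻¹ ≤ ((k : ℝ) + 1)⁻¹ := by
      apply inv_anti₀ (by positivity) h1
    linarith
  have hmono : ∀ k l : ℕ, k ≤ l → ∀ i j, T k i j ≤ T l i j := by
    intro k l hkl
    have h2 : (t k) • (1 : Matrix (Fin n) (Fin n) ℝ) - N =
        ((t l) • (1 : Matrix (Fin n) (Fin n) ℝ) - N) + (t k - t l) • (1 : Matrix (Fin n) (Fin n) ℝ) := by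
      module
    have hid : T l = T k + (t k - t l) • (T l * T k) := by
      calc T l = T l * (((t k) • (1 : Matrix (Fin n) (Fin n) ℝ) - N) * T k) := by
            rw [hTr k, Matrix.mul_one]
        _ = (T l * ((t l) • (1 : Matrix (Fin n) (Fin n) ℝ) - N)) * T k
              + (t k - t l) • ((T l * (1 : Matrix (Fin n) (Fin n) ℝ)) * T k) := by
            rw [h2]
            noncomm_ring
        _ = T k + (t k - t l) • (T l * T k) := by
            rw [hTl l, Matrix.one_mul, Matrix.mul_one]
    intro i j
    have hc : 0 ≤ t k - t l := sub_nonneg.2 (htmono k l hkl)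
    have h3 : T l i j = T k i j + (t k - t l) * (T l * T k) i j := by
      have := congrFun (congrFun hid i) j
      simpa [Matrix.add_apply, Matrix.smul_apply, smul_eq_mul] using this
    have h4 : 0 ≤ (T l * T k) i j := by
      rw [Matrix.mul_apply]
      exact Finset.sum_nonneg fun a _ => mul_nonneg (hTnn l i a) (hTnn k a j)
    nlinarith
  have hinv_small : Tendsto (fun k : ℕ => ((k : ℝ) + 1)⁻¹) atTop (𝓝 0) := by
    have := tendsto_one_div_add_atTop_nhds_zero_nat (𝕜 := ℝ)
    simpa [one_div] using this
  by_cases hbddT : ∃ Cb : ℝ, ∀ (k : ℕ) (i j : Fin n), T k i j ≤ Cb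
  · exfalso
    obtain ⟨Cb, hCb⟩ := hbddT
    set S : Matrix (Fin n) (Fin n) ℝ := Matrix.of (fun i j => ⨆ k, T k i j) with hS
    have hbAbove : ∀ i j, BddAbove (Set.range fun k => T k i j) := by
      intro i j
      exact ⟨Cb, by rintro x ⟨k, rfl⟩; exact hCb k i j⟩
    have htendS : ∀ i j, Tendsto (fun k => T k i j) atTop (𝓝 (S i j)) := by
      intro i j
      exact tendsto_atTop_ciSup (fun k l hkl => hmono k l hkl i j) (hbAbove i j)
    have hSnn : ∀ i j, 0 ≤ S i j := fun i j =>
      le_trans (hTnn 0 i j) (le_ciSup (hbAbove i j) 0)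
    have hrS : (s₀ • (1 : Matrix (Fin n) (Fin n) ℝ) - N) * S = 1 := by
      ext i j
      have heq : ∀ k, ((s₀ • (1 : Matrix (Fin n) (Fin n) ℝ) - N) * T k) i j =
          (1 : Matrix (Fin n) (Fin n) ℝ) i j - (t k - s₀) * T k i j := by
        intro k
        have h3 : s₀ • (1 : Matrix (Fin n) (Fin n) ℝ) - N =
            ((t k) • (1 : Matrix (Fin n) (Fin n) ℝ) - N) - (t k - s₀) • (1 : Matrix (Fin n) (Fin n) ℝ) := by
          module
        have h2 : (s₀ • (1 : Matrix (Fin n) (Fin n) ℝ) - N) * T k = 1 - (t k - s₀) • T k := by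
          rw [h3, Matrix.sub_mul, hTr k, Matrix.smul_mul, Matrix.one_mul]
        rw [h2]
        simp [Matrix.sub_apply, Matrix.smul_apply, smul_eq_mul]
      have hA : Tendsto (fun k => ((s₀ • (1 : Matrix (Fin n) (Fin n) ℝ) - N) * T k) i j)
          atTop (𝓝 (((s₀ • (1 : Matrix (Fin n) (Fin n) ℝ) - N) * S) i j)) := by
        simp only [Matrix.mul_apply]
        exact tendsto_finset_sum _ (fun l _ => (htendS l j).const_mul _)
      have h0 : Tendsto (fun k => (t k - s₀) * T k i j) atTop (𝓝 (0 * S i j)) := by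
        refine Tendsto.mul ?_ (htendS i j)
        have : (fun k : ℕ => t k - s₀) = fun k : ℕ => ((k : ℝ) + 1)⁻¹ := by
          funext k; simp [ht]
        rw [this]
        exact hinv_small
      rw [zero_mul] at h0
      have hB : Tendsto (fun k => ((s₀ • (1 : Matrix (Fin n) (Fin n) ℝ) - N) * T k) i j)
          atTop (𝓝 ((1 : Matrix (Fin n) (Fin n) ℝ) i j)) := by
        have hc : Tendsto (fun _ : ℕ => (1 : Matrix (Fin n) (Fin n) ℝ) i j) atTop
            (𝓝 ((1 : Matrix (Fin n) (Fin n) ℝ) i j)) := tendsto_const_nhds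
        have h5 := hc.sub h0
        rw [sub_zero] at h5
        exact h5.congr (fun k => (heq k).symm)
      exact tendsto_nhds_unique hA hB
    have hUS : IsUnit (s₀ • (1 : Matrix (Fin n) (Fin n) ℝ) - N) :=
      ((Matrix.isUnit_iff_isUnit_det _).2 (Matrix.isUnit_det_of_right_inverse hrS))
    have hSinv : (s₀ • (1 : Matrix (Fin n) (Fin n) ℝ) - N)⁻¹ = S := Matrix.inv_eq_right_inv hrS
    -- extend goodness below s₀
    set qS : ℝ := (∑ i, ∑ j, S i j) + 1 with hqS
    have hqS0 : 0 < qS := by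
      have : 0 ≤ ∑ i, ∑ j, S i j :=
        Finset.sum_nonneg fun i _ => Finset.sum_nonneg fun j _ => hSnn i j
      simp only [hqS]; linarith
    set ε : ℝ := qS⁻¹ with hε
    have hε0 : 0 < ε := by positivity
    have hrowS : ∀ i, ∑ j, S i j ≤ qS - 1 := by
      intro i
      simp only [hqS, add_sub_cancel_right]
      exact Finset.single_le_sum (f := fun i => ∑ j, S i j)
        (fun i _ => Finset.sum_nonneg fun j _ => hSnn i j) (Finset.mem_univ i)
    have hgood_below : ∀ t' : ℝ, s₀ - ε ≤ t' → t' < s₀ → Good t' := by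
      intro t' ht'1 ht'2
      set C' : Matrix (Fin n) (Fin n) ℝ := (s₀ - t') • S with hC'
      have hC'nn : ∀ i j, 0 ≤ C' i j := by
        intro i j
        rw [hC', Matrix.smul_apply, smul_eq_mul]
        exact mul_nonneg (by linarith) (hSnn i j)
      have hrowC' : ∀ i, ∑ j, C' i j ≤ ε * (qS - 1) := by
        intro i
        have h1 : ∑ j, C' i j = (s₀ - t') * ∑ j, S i j := by
          rw [Finset.mul_sum]
          exact Finset.sum_congr rfl fun j _ => by rw [hC', Matrix.smul_apply, smul_eq_mul]
        rw [h1]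
        have h2 : 0 ≤ ∑ j, S i j := Finset.sum_nonneg fun j _ => hSnn i j
        have h3 : s₀ - t' ≤ ε := by linarith
        have h4 : (s₀ - t') * ∑ j, S i j ≤ ε * ∑ j, S i j :=
          mul_le_mul_of_nonneg_right h3 h2
        refine le_trans h4 (mul_le_mul_of_nonneg_left (hrowS i) hε0.le)
      have hql : ε * (qS - 1) < 1 := by
        rw [hε]
        rw [inv_mul_lt_iff₀ hqS0, mul_one]
        linarith
      have hq0' : 0 ≤ ε * (qS - 1) :=
        le_trans (Finset.sum_nonneg fun j _ => hC'nn ⟨0, hn⟩ j) (hrowC' ⟨0, hn⟩)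
      obtain ⟨hU', hinv'⟩ := neumann C' hC'nn hrowC' hq0' hql
      have hfac : t' • (1 : Matrix (Fin n) (Fin n) ℝ) - N =
          (s₀ • (1 : Matrix (Fin n) (Fin n) ℝ) - N) * (1 - C') := by
        rw [Matrix.mul_sub, Matrix.mul_one, hC', Matrix.mul_smul, hrS]
        module
      have hmul : (t' • (1 : Matrix (Fin n) (Fin n) ℝ) - N) * ((1 - C')⁻¹ * S) = 1 := by
        rw [hfac, Matrix.mul_assoc, ← Matrix.mul_assoc (1 - C'),
          Matrix.mul_nonsing_inv _ ((Matrix.isUnit_iff_isUnit_det _).1 hU'),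
          Matrix.one_mul, hrS]
      refine ⟨((Matrix.isUnit_iff_isUnit_det _).2 (Matrix.isUnit_det_of_right_inverse hmul)), ?_⟩
      rw [Matrix.inv_eq_right_inv hmul]
      intro i j
      rw [Matrix.mul_apply]
      exact Finset.sum_nonneg fun l _ => mul_nonneg (hinv' i l) (hSnn l j)
    have hmem : (s₀ - ε) ∈ G := by
      intro t' ht'
      rcases lt_or_ge t' s₀ with h | h
      · exact hgood_below t' ht' h
      · rcases eq_or_lt_of_le h with h' | h'
        · refine ⟨?_, ?_⟩ <;> rw [← h']
          · exact hUS
          · rw [hSinv]; exact hSnn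
        · exact hgood t' h'
    have := csInf_le hbdd hmem
    rw [← hs₀] at this
    linarith
  · push_neg at hbddT
    set m : ℕ → ℝ := fun k => ∑ i, ∑ j, T k i j with hm
    have hmmono : Monotone m := by
      intro k l hkl
      exact Finset.sum_le_sum fun i _ => Finset.sum_le_sum fun j _ => hmono k l hkl i j
    have hentry_le : ∀ (k : ℕ) (i j : Fin n), T k i j ≤ m k := by
      intro k i j
      have h1 : T k i j ≤ ∑ j, T k i j :=
        Finset.single_le_sum (f := fun j => T k i j) (fun j _ => hTnn k i j) (Finset.mem_univ j)
      refine le_trans h1 ?_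
      exact Finset.single_le_sum (f := fun i => ∑ j, T k i j)
        (fun i _ => Finset.sum_nonneg fun j _ => hTnn k i j) (Finset.mem_univ i)
    have hm_unbdd : ∀ Cb : ℝ, ∃ k, Cb < m k := by
      intro Cb
      obtain ⟨k, i, j, hk⟩ := hbddT Cb
      exact ⟨k, lt_of_lt_of_le hk (hentry_le k i j)⟩
    obtain ⟨k₀, hk₀⟩ := hm_unbdd 1
    have hmk : ∀ k : ℕ, 1 < m (k + k₀) := fun k =>
      lt_of_lt_of_le hk₀ (hmmono (Nat.le_add_left k₀ k))
    have hmkpos : ∀ k : ℕ, 0 < m (k + k₀) := fun k => lt_trans one_pos (hmk k)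
    set x : ℕ → Fin n → ℝ := fun k => T (k + k₀) *ᵥ (fun _ => 1) with hx
    have hxval : ∀ k i, x k i = ∑ j, T (k + k₀) i j := by
      intro k i
      simp [hx, Matrix.mulVec, dotProduct]
    set v : ℕ → Fin n → ℝ := fun k => (m (k + k₀))⁻¹ • x k with hv
    have hv0 : ∀ k i, 0 ≤ v k i := by
      intro k i
      rw [hv]
      simp only [Pi.smul_apply, smul_eq_mul]
      refine mul_nonneg (inv_nonneg.2 (hmkpos k).le) ?_
      rw [hxval]
      exact Finset.sum_nonneg fun j _ => hTnn _ i j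
    have hxle : ∀ k i, x k i ≤ m (k + k₀) := by
      intro k i
      rw [hxval]
      exact Finset.single_le_sum (f := fun i => ∑ j, T (k + k₀) i j)
        (fun i _ => Finset.sum_nonneg fun j _ => hTnn _ i j) (Finset.mem_univ i)
    have hv1 : ∀ k i, v k i ≤ 1 := by
      intro k i
      rw [hv]
      simp only [Pi.smul_apply, smul_eq_mul]
      rw [inv_mul_le_iff₀ (hmkpos k), mul_one]
      exact hxle k i
    have hmem : ∀ k, v k ∈ Set.Icc (0 : Fin n → ℝ) 1 := by
      intro k
      constructor
      · intro i; exact hv0 k i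
      · intro i; exact hv1 k i
    obtain ⟨w, hwmem, φ, hφmono, hφtend⟩ :=
      (isCompact_Icc (a := (0 : Fin n → ℝ)) (b := 1)).tendsto_subseq hmem
    have hw0 : ∀ i, 0 ≤ w i := fun i => hwmem.1 i
    have hcomp : ∀ i, Tendsto (fun k => v (φ k) i) atTop (𝓝 (w i)) := by
      intro i
      exact (tendsto_pi_nhds.1 hφtend) i
    have hsum1 : ∀ k, ∑ i, v k i = 1 := by
      intro k
      have h1 : ∑ i, v k i = (m (k + k₀))⁻¹ * ∑ i, x k i := by
        rw [Finset.mul_sum]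
        exact Finset.sum_congr rfl fun i _ => by
          rw [hv]; simp only [Pi.smul_apply, smul_eq_mul]
      have h2 : ∑ i, x k i = m (k + k₀) := by
        rw [hm]
        exact Finset.sum_congr rfl fun i _ => hxval k i
      rw [h1, h2, inv_mul_cancel₀ (hmkpos k).ne']
    have hwsum : ∑ i, w i = 1 := by
      have hA : Tendsto (fun k => ∑ i, v (φ k) i) atTop (𝓝 (∑ i, w i)) :=
        tendsto_finset_sum _ (fun i _ => hcomp i)
      have hB : Tendsto (fun k => ∑ i, v (φ k) i) atTop (𝓝 1) := by
        have : (fun k => ∑ i, v (φ k) i) = fun _ => (1 : ℝ) := funext fun k => hsum1 (φ k)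
        rw [this]
        exact tendsto_const_nhds
      exact tendsto_nhds_unique hA hB
    have hwne : w ≠ 0 := by
      intro h
      rw [h] at hwsum
      simp at hwsum
    -- the eigen equation
    have heqk : ∀ k i, ∑ j, N i j * v k j = t (k + k₀) * v k i - (m (k + k₀))⁻¹ := by
      intro k i
      have h1 : ((t (k + k₀)) • (1 : Matrix (Fin n) (Fin n) ℝ) - N) *ᵥ x k = (fun _ => 1) := by
        rw [hx, Matrix.mulVec_mulVec, hTr (k + k₀), Matrix.one_mulVec]
      have h2 : t (k + k₀) * x k i - ∑ j, N i j * x k j = 1 := by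
        have := congrFun h1 i
        rw [Matrix.sub_mulVec, Matrix.smul_mulVec, Matrix.one_mulVec] at this
        simpa [Matrix.mulVec, dotProduct] using this
      have h3 : ∑ j, N i j * v k j = (m (k + k₀))⁻¹ * ∑ j, N i j * x k j := by
        rw [Finset.mul_sum]
        refine Finset.sum_congr rfl fun j _ => ?_
        rw [hv]; simp only [Pi.smul_apply, smul_eq_mul]; ring
      rw [h3]
      have h4 : v k i = (m (k + k₀))⁻¹ * x k i := by
        rw [hv]; simp only [Pi.smul_apply, smul_eq_mul]
      rw [h4]
      have h5 : ∑ j, N i j * x k j = t (k + k₀) * x k i - 1 := by linarith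
      rw [h5]
      ring
    -- limits
    have hminv : Tendsto (fun k => (m (φ k + k₀))⁻¹) atTop (𝓝 0) := by
      refine Tendsto.comp tendsto_inv_atTop_zero ?_
      refine tendsto_atTop_mono (fun k => hmmono (Nat.add_le_add_right hφmono.le_apply k₀)) ?_
      refine tendsto_atTop_atTop_of_monotone' (fun a b hab => hmmono (by omega)) ?_
      intro hba
      obtain ⟨b, hb⟩ := hba
      obtain ⟨k, hk⟩ := hm_unbdd b
      have : m (k + k₀) ≤ b := hb ⟨k, rfl⟩
      have : m k ≤ m (k + k₀) := hmmono (by omega)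
      linarith
    have htphi : Tendsto (fun k => t (φ k + k₀)) atTop (𝓝 s₀) := by
      have hle1 : ∀ k : ℕ, s₀ ≤ t (φ k + k₀) := fun k => (htpos _).le
      have hle2 : ∀ k : ℕ, t (φ k + k₀) ≤ s₀ + ((k : ℝ) + 1)⁻¹ := by
        intro k
        have h6 : ((k : ℝ) + 1) ≤ ((φ k + k₀ : ℕ) : ℝ) + 1 := by
          have : (k : ℝ) ≤ ((φ k + k₀ : ℕ) : ℝ) :=
            Nat.cast_le.2 (le_trans hφmono.le_apply (by omega))
          linarith
        have h7 : ((((φ k + k₀ : ℕ) : ℝ)) + 1)⁻¹ ≤ ((k : ℝ) + 1)⁻¹ :=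
          inv_anti₀ (by positivity) h6
        show s₀ + ((((φ k + k₀ : ℕ) : ℝ)) + 1)⁻¹ ≤ s₀ + ((k : ℝ) + 1)⁻¹
        linarith
      have hA : Tendsto (fun k : ℕ => s₀ + ((k : ℝ) + 1)⁻¹) atTop (𝓝 (s₀ + 0)) :=
        tendsto_const_nhds.add hinv_small
      rw [add_zero] at hA
      exact tendsto_of_tendsto_of_tendsto_of_le_of_le tendsto_const_nhds hA hle1 hle2
    have heig : N *ᵥ w = s₀ • w := by
      funext i
      have hA : Tendsto (fun k => ∑ j, N i j * v (φ k) j) atTop (𝓝 (∑ j, N i j * w j)) :=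
        tendsto_finset_sum _ (fun j _ => (hcomp j).const_mul _)
      have hB : Tendsto (fun k => t (φ k + k₀) * v (φ k) i - (m (φ k + k₀))⁻¹) atTop
          (𝓝 (s₀ * w i - 0)) := (htphi.mul (hcomp i)).sub hminv
      rw [sub_zero] at hB
      have hAB : (fun k => ∑ j, N i j * v (φ k) j) =
          fun k => t (φ k + k₀) * v (φ k) i - (m (φ k + k₀))⁻¹ :=
        funext fun k => heqk (φ k) i
      rw [hAB] at hA
      have := tendsto_nhds_unique hA hB
      have hgoal : (N *ᵥ w) i = ∑ j, N i j * w j := by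
        simp [Matrix.mulVec, dotProduct]
      rw [hgoal, this]
      simp [Pi.smul_apply, smul_eq_mul]
    exact ⟨s₀, w, hw0, hwne, heig, habs, fun s hs => hgood s hs⟩


lemma metzler_pf (hn : 0 < n) (A : Matrix (Fin n) (Fin n) ℝ) (hA : IsMetzler A) :
    ∃ lam : ℝ, ∃ v : Fin n → ℝ, (∀ i, 0 ≤ v i) ∧ v ≠ 0 ∧ A *ᵥ v = lam • v ∧
      (∀ μ ∈ spectrum ℂ (A.map Complex.ofReal), μ.re ≤ lam) ∧
      (lam < 0 → IsUnit A.det ∧ ∀ i j, A⁻¹ i j ≤ 0) := by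
  classical
  set s : ℝ := (∑ i, |A i i|) + 1 with hs
  have habs_le : ∀ i, |A i i| ≤ s - 1 := by
    intro i
    simp only [hs, add_sub_cancel_right]
    exact Finset.single_le_sum (f := fun i => |A i i|) (fun i _ => abs_nonneg _)
      (Finset.mem_univ i)
  set N : Matrix (Fin n) (Fin n) ℝ := A + s • 1 with hNdef
  have hN : ∀ i j, 0 ≤ N i j := by
    intro i j
    rw [hNdef, Matrix.add_apply, Matrix.smul_apply, smul_eq_mul]
    by_cases h : i = j
    · subst h
      rw [Matrix.one_apply_eq]
      have h1 := habs_le i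
      have h2 := neg_abs_le (A i i)
      linarith
    · rw [Matrix.one_apply_ne h]
      have := hA i j h
      linarith
  obtain ⟨s₀, v, hv0, hvne, heig, habs, hgood⟩ := pf_core hn N hN
  have hmap : N.map Complex.ofReal = A.map Complex.ofReal + (s : ℂ) • 1 := by
    ext i j
    by_cases h : i = j <;>
      simp [hNdef, Matrix.map_apply, Matrix.add_apply, Matrix.smul_apply, Matrix.one_apply, h]
  refine ⟨s₀ - s, v, hv0, hvne, ?_, ?_, ?_⟩
  · have h1 : N *ᵥ v = A *ᵥ v + s • v := by
      rw [hNdef, Matrix.add_mulVec, Matrix.smul_mulVec, Matrix.one_mulVec]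
    rw [h1] at heig
    have : A *ᵥ v = s₀ • v - s • v := by
      rw [← heig]; abel
    rw [this, sub_smul]
  · intro μ hμ
    have hshift : (μ + (s : ℂ)) ∈ spectrum ℂ (N.map Complex.ofReal) := by
      rw [spectrum.mem_iff] at hμ ⊢
      have heqm : (algebraMap ℂ (Matrix (Fin n) (Fin n) ℂ)) (μ + (s : ℂ)) - N.map Complex.ofReal
          = (algebraMap ℂ (Matrix (Fin n) (Fin n) ℂ)) μ - A.map Complex.ofReal := by
        rw [hmap, Algebra.algebraMap_eq_smul_one, Algebra.algebraMap_eq_smul_one]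
        module
      rw [heqm]
      exact hμ
    have h2 := habs _ hshift
    have h3 : (μ + (s : ℂ)).re ≤ ‖μ + (s : ℂ)‖ := Complex.re_le_norm _
    have h4 : (μ + (s : ℂ)).re = μ.re + s := by simp
    linarith
  · intro hlam
    have hs₀ : s₀ < s := by linarith
    obtain ⟨hU, hinv⟩ := hgood s hs₀
    have hkey : s • (1 : Matrix (Fin n) (Fin n) ℝ) - N = -A := by
      rw [hNdef]; module
    rw [hkey] at hU hinv
    have hdetA : IsUnit A.det := by
      have h1 : IsUnit (-A).det := (Matrix.isUnit_iff_isUnit_det _).1 hU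
      rw [Matrix.det_neg] at h1
      rw [isUnit_iff_ne_zero] at h1 ⊢
      intro h2
      apply h1
      rw [h2, mul_zero]
    have hmulA : A * (-(-A)⁻¹) = 1 := by
      have h5 : A * (-(-A)⁻¹) = (-A) * (-A)⁻¹ := by noncomm_ring
      rw [h5, Matrix.mul_nonsing_inv _ ((Matrix.isUnit_iff_isUnit_det _).1 hU)]
    have hAinv : A⁻¹ = -(-A)⁻¹ := Matrix.inv_eq_right_inv hmulA
    refine ⟨hdetA, fun i j => ?_⟩
    rw [hAinv]
    simp only [Matrix.neg_apply]
    linarith [hinv i j]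

lemma real_eig_mem (A : Matrix (Fin n) (Fin n) ℝ) {lam : ℝ} {v : Fin n → ℝ}
    (hv : v ≠ 0) (h : A *ᵥ v = lam • v) :
    (lam : ℂ) ∈ spectrum ℂ (A.map Complex.ofReal) := by
  rw [spectrum.mem_iff]
  intro hU
  have hdet : ((algebraMap ℂ (Matrix (Fin n) (Fin n) ℂ)) (lam : ℂ) - A.map Complex.ofReal).det = 0 := by
    apply (Matrix.exists_mulVec_eq_zero_iff).1
    refine ⟨fun i => (v i : ℂ), ?_, ?_⟩
    · intro h0
      apply hv
      funext i
      have h2 : (v i : ℂ) = 0 := congrFun h0 i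
      have h3 : v i = 0 := by exact_mod_cast h2
      simpa using h3
    · rw [Matrix.sub_mulVec, Algebra.algebraMap_eq_smul_one, Matrix.smul_mulVec,
        Matrix.one_mulVec]
      funext i
      have h1 := congrFun h i
      simp only [Matrix.mulVec, dotProduct, Pi.smul_apply, smul_eq_mul] at h1
      simp only [Pi.sub_apply, Pi.smul_apply, smul_eq_mul, Matrix.mulVec, dotProduct,
        Matrix.map_apply, Pi.zero_apply]
      rw [sub_eq_zero]
      have h4 : ((lam * v i : ℝ) : ℂ) = ((∑ x, A i x * v x : ℝ) : ℂ) := by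
        exact_mod_cast congrArg Complex.ofReal h1.symm
      push_cast at h4
      exact h4
  have := ((Matrix.isUnit_iff_isUnit_det _).1 hU).ne_zero
  exact this hdet


lemma spectrum_transpose (A : Matrix (Fin n) (Fin n) ℝ) :
    spectrum ℂ (Aᵀ.map Complex.ofReal) = spectrum ℂ (A.map Complex.ofReal) := by
  ext μ
  rw [spectrum.mem_iff, spectrum.mem_iff]
  have h : (algebraMap ℂ (Matrix (Fin n) (Fin n) ℂ)) μ - Aᵀ.map Complex.ofReal
      = ((algebraMap ℂ (Matrix (Fin n) (Fin n) ℂ)) μ - A.map Complex.ofReal)ᵀ := by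
    rw [Matrix.transpose_sub, Matrix.transpose_map, Algebra.algebraMap_eq_smul_one,
      Matrix.transpose_smul, Matrix.transpose_one]
  rw [h, Matrix.isUnit_iff_isUnit_det, Matrix.det_transpose, ← Matrix.isUnit_iff_isUnit_det]

lemma hurwitz_zero (hn : n = 0) (A : Matrix (Fin n) (Fin n) ℝ) : IsHurwitz A := by
  intro μ hμ
  rw [spectrum.mem_iff] at hμ
  exfalso
  apply hμ
  have h1 : (algebraMap ℂ (Matrix (Fin n) (Fin n) ℂ)) μ - A.map Complex.ofReal = 1 := by
    funext i
    exact absurd i.isLt (by omega)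
  rw [h1]
  exact isUnit_one

theorem main (H M : Matrix (Fin n) (Fin n) ℝ)
    (hHmetzler : IsMetzler H) (hMmetzler : IsMetzler M) (hHhurwitz : IsHurwitz H)
    (hMHmetzler : IsMetzler (-(M * H⁻¹))) :
    IsHurwitz M ↔ IsHurwitz (-(M * H⁻¹)) := by
  rcases Nat.eq_zero_or_pos n with hn | hn
  · exact ⟨fun _ => hurwitz_zero hn _, fun _ => hurwitz_zero hn _⟩
  obtain ⟨lamH, vH, hvH0, hvHne, heigH, hspecH, hinvH⟩ := metzler_pf hn H hHmetzler
  have hlamH : lamH < 0 := by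
    have h1 := real_eig_mem H hvHne heigH
    have h2 := hHhurwitz _ h1
    simpa using h2
  obtain ⟨hHdet, hHinvle⟩ := hinvH hlamH
  have hMT : IsMetzler Mᵀ := fun i j hij => hMmetzler j i (Ne.symm hij)
  constructor
  · -- M Hurwitz → -(M * H⁻¹) Hurwitz
    intro hM
    obtain ⟨lamT, ψ0, hψ00, hψ0ne, heigT, hspecT, hinvT⟩ := metzler_pf hn Mᵀ hMT
    have hlamT : lamT < 0 := by
      have h1 := real_eig_mem Mᵀ hψ0ne heigT
      rw [spectrum_transpose] at h1
      have h2 := hM _ h1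
      simpa using h2
    obtain ⟨hMTdet, hMTinvle⟩ := hinvT hlamT
    intro μ hμ
    by_contra hre
    push_neg at hre
    obtain ⟨lamA, v, hv0, hvne, heigA, hspecA, _⟩ := metzler_pf hn (-(M * H⁻¹)) hMHmetzler
    have hlamA : 0 ≤ lamA := le_trans hre (hspecA μ hμ)
    set z : Fin n → ℝ := -(H⁻¹ *ᵥ v) with hz
    have hz0 : ∀ i, 0 ≤ z i := by
      intro i
      rw [hz]
      simp only [Pi.neg_apply]
      refine neg_nonneg.2 ?_
      simp only [Matrix.mulVec, dotProduct]
      exact Finset.sum_nonpos fun j _ => mul_nonpos_iff.2 (Or.inr ⟨hHinvle i j, hv0 j⟩)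
    have hzne : z ≠ 0 := by
      intro h0
      have h1 : H⁻¹ *ᵥ v = 0 := by
        rw [hz, neg_eq_zero] at h0
        exact h0
      have h2 : v = 0 := by
        have h3 := congrArg (fun y => H *ᵥ y) h1
        simpa [Matrix.mulVec_mulVec, Matrix.mul_nonsing_inv H hHdet, Matrix.one_mulVec] using h3
      exact hvne h2
    have hMz : M *ᵥ z = lamA • v := by
      rw [hz, Matrix.mulVec_neg, Matrix.mulVec_mulVec, ← Matrix.neg_mulVec, heigA]
    set ψ : Fin n → ℝ := -((Mᵀ)⁻¹ *ᵥ (fun _ => 1)) with hψ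
    have hψnn : ∀ i, 0 ≤ ψ i := by
      intro i
      rw [hψ]
      simp only [Pi.neg_apply]
      refine neg_nonneg.2 ?_
      simp only [Matrix.mulVec, dotProduct, mul_one]
      exact Finset.sum_nonpos fun j _ => hMTinvle i j
    have hMTψ : Mᵀ *ᵥ ψ = (fun _ => (-1 : ℝ)) := by
      rw [hψ, Matrix.mulVec_neg, Matrix.mulVec_mulVec, Matrix.mul_nonsing_inv _ hMTdet,
        Matrix.one_mulVec]
      funext i
      simp
    have hdot1 : ψ ⬝ᵥ (M *ᵥ z) = -(∑ i, z i) := by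
      rw [Matrix.dotProduct_mulVec, ← Matrix.mulVec_transpose, hMTψ]
      simp [dotProduct]
    have hdot2 : ψ ⬝ᵥ (M *ᵥ z) = lamA * (ψ ⬝ᵥ v) := by
      rw [hMz, dotProduct_smul, smul_eq_mul]
    have hzsum : 0 < ∑ i, z i := by
      obtain ⟨i, hi⟩ := Function.ne_iff.1 hzne
      have hzi : 0 < z i := lt_of_le_of_ne (hz0 i) (by simpa [eq_comm] using hi)
      have := Finset.single_le_sum (f := z) (fun j _ => hz0 j) (Finset.mem_univ i)
      linarith
    have hnn : 0 ≤ lamA * (ψ ⬝ᵥ v) :=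
      mul_nonneg hlamA (Finset.sum_nonneg fun i _ => mul_nonneg (hψnn i) (hv0 i))
    linarith [hdot1 ▸ hdot2]
  · -- -(M * H⁻¹) Hurwitz → M Hurwitz
    intro hA
    obtain ⟨lamA, vA, hvA0, hvAne, heigA, hspecA, hinvA⟩ :=
      metzler_pf hn (-(M * H⁻¹)) hMHmetzler
    have hlamA : lamA < 0 := by
      have h1 := real_eig_mem (-(M * H⁻¹)) hvAne heigA
      have h2 := hA _ h1
      simpa using h2
    obtain ⟨hAdet, hAinvle⟩ := hinvA hlamA
    set x : Fin n → ℝ := -((-(M * H⁻¹))⁻¹ *ᵥ (fun _ => 1)) with hx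
    have hx0 : ∀ i, 0 ≤ x i := by
      intro i
      rw [hx]
      simp only [Pi.neg_apply]
      refine neg_nonneg.2 ?_
      simp only [Matrix.mulVec, dotProduct, mul_one]
      exact Finset.sum_nonpos fun j _ => hAinvle i j
    have hAx : (-(M * H⁻¹)) *ᵥ x = (fun _ => (-1 : ℝ)) := by
      rw [hx, Matrix.mulVec_neg, Matrix.mulVec_mulVec, Matrix.mul_nonsing_inv _ hAdet,
        Matrix.one_mulVec]
      funext i
      simp
    set u : Fin n → ℝ := -(H⁻¹ *ᵥ x) with hu
    have hu0 : ∀ i, 0 ≤ u i := by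
      intro i
      rw [hu]
      simp only [Pi.neg_apply]
      refine neg_nonneg.2 ?_
      simp only [Matrix.mulVec, dotProduct]
      exact Finset.sum_nonpos fun j _ => mul_nonpos_iff.2 (Or.inr ⟨hHinvle i j, hx0 j⟩)
    have hMu : M *ᵥ u = (fun _ => (-1 : ℝ)) := by
      rw [hu, Matrix.mulVec_neg, Matrix.mulVec_mulVec, ← Matrix.neg_mulVec, hAx]
    intro μ hμ
    by_contra hre
    push_neg at hre
    obtain ⟨lamT, φ, hφ0, hφne, heigT, hspecT, _⟩ := metzler_pf hn Mᵀ hMT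
    have hμT : μ ∈ spectrum ℂ (Mᵀ.map Complex.ofReal) := by
      rw [spectrum_transpose]
      exact hμ
    have hlamT : 0 ≤ lamT := le_trans hre (hspecT μ hμT)
    have hdot1 : φ ⬝ᵥ (M *ᵥ u) = -(∑ i, φ i) := by
      rw [hMu]
      simp [dotProduct]
    have hdot2 : φ ⬝ᵥ (M *ᵥ u) = lamT * (φ ⬝ᵥ u) := by
      rw [Matrix.dotProduct_mulVec, ← Matrix.mulVec_transpose, heigT,
        smul_dotProduct, smul_eq_mul]
    have hφsum : 0 < ∑ i, φ i := by
      obtain ⟨i, hi⟩ := Function.ne_iff.1 hφne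
      have hφi : 0 < φ i := lt_of_le_of_ne (hφ0 i) (by simpa [eq_comm] using hi)
      have := Finset.single_le_sum (f := φ) (fun j _ => hφ0 j) (Finset.mem_univ i)
      linarith
    have hnn : 0 ≤ lamT * (φ ⬝ᵥ u) :=
      mul_nonneg hlamT (Finset.sum_nonneg fun i _ => mul_nonneg (hφ0 i) (hu0 i))
    linarith [hdot1 ▸ hdot2]


end MHuW

/-- Lemma 2 (Properties of Hurwitz and Metzler Matrices): if `H` and `M` are Metzler,
`H` is Hurwitz, and `-M H⁻¹` is Metzler, then `M` is Hurwitz iff `-M H⁻¹` is Hurwitz. -/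
theorem metzler_hurwitz_iff_neg_mul_inv_hurwitz {n : ℕ} (H M : Matrix (Fin n) (Fin n) ℝ)
    (hHmetzler : IsMetzler H) (hMmetzler : IsMetzler M) (hHhurwitz : IsHurwitz H)
    (hMHmetzler : IsMetzler (-(M * H⁻¹))) :
    IsHurwitz M ↔ IsHurwitz (-(M * H⁻¹)) :=
  MHuW.main H M hHmetzler hMmetzler hHhurwitz hMHmetzler
end

section
/- Let H be an n×n real matrix that is Metzler and Hurwitz, and let E be an n×n real matrix with all entries nonnegative. Then H + E is Hurwitz if and only if the spectral radius of -E H⁻¹ is strictly less than 1. -/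
open Matrix
open scoped ENNReal NNReal

attribute [local instance] Matrix.linftyOpNormedAddCommGroup Matrix.linftyOpNormedRing
  Matrix.linftyOpNormedAlgebra Matrix.linftyOpNormedSpace

namespace PMH

variable {n : ℕ}

abbrev cmap (B : Matrix (Fin n) (Fin n) ℝ) : Matrix (Fin n) (Fin n) ℂ :=
  B.map Complex.ofReal

example : CompleteSpace (Matrix (Fin n) (Fin n) ℂ) := by infer_instance

lemma cmap_mul (A B : Matrix (Fin n) (Fin n) ℝ) : cmap (A * B) = cmap A * cmap B := by
  ext i j; simp [cmap, Matrix.mul_apply]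

lemma cmap_add (A B : Matrix (Fin n) (Fin n) ℝ) : cmap (A + B) = cmap A + cmap B := by
  ext i j; simp [cmap]

lemma cmap_one : cmap (1 : Matrix (Fin n) (Fin n) ℝ) = 1 := by
  ext i j; simp [cmap, Matrix.one_apply]; split <;> simp

lemma cmap_pow (B : Matrix (Fin n) (Fin n) ℝ) (k : ℕ) : cmap (B ^ k) = cmap B ^ k := by
  induction k with
  | zero => simp [cmap_one]
  | succ k ih => rw [pow_succ, pow_succ, cmap_mul, ih]

lemma cmap_smul (s : ℝ) (B : Matrix (Fin n) (Fin n) ℝ) :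
    cmap (s • B) = (s : ℂ) • cmap B := by
  ext i j; simp [cmap]

lemma cmap_neg (B : Matrix (Fin n) (Fin n) ℝ) : cmap (-B) = -cmap B := by
  ext i j; simp [cmap]

lemma cmap_sub (A B : Matrix (Fin n) (Fin n) ℝ) : cmap (A - B) = cmap A - cmap B := by
  ext i j; simp [cmap]

lemma cmap_det (B : Matrix (Fin n) (Fin n) ℝ) : (cmap B).det = (B.det : ℂ) := by
  exact (RingHom.map_det Complex.ofRealHom B).symm

lemma isUnit_cmap_iff (B : Matrix (Fin n) (Fin n) ℝ) : IsUnit (cmap B) ↔ IsUnit B := by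
  rw [Matrix.isUnit_iff_isUnit_det, Matrix.isUnit_iff_isUnit_det, cmap_det,
    isUnit_iff_ne_zero, isUnit_iff_ne_zero]
  exact_mod_cast Iff.rfl

lemma cmap_inv (B : Matrix (Fin n) (Fin n) ℝ) : cmap (B⁻¹) = (cmap B)⁻¹ := by
  by_cases h : IsUnit B
  · have hdet : IsUnit B.det := (Matrix.isUnit_iff_isUnit_det B).mp h
    refine (Matrix.inv_eq_right_inv ?_).symm
    rw [← cmap_mul, Matrix.mul_nonsing_inv _ hdet, cmap_one]
  · rw [Matrix.nonsing_inv_eq_ringInverse, Matrix.nonsing_inv_eq_ringInverse,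
      Ring.inverse_non_unit _ h, Ring.inverse_non_unit _ (by rwa [isUnit_cmap_iff])]
    ext i j; simp [cmap]


section Norms

lemma nnnorm_entry_le (M : Matrix (Fin n) (Fin n) ℂ) (i j : Fin n) : ‖M i j‖₊ ≤ ‖M‖₊ := by
  rw [Matrix.linfty_opNNNorm_def]
  refine le_trans (Finset.single_le_sum (f := fun k => ‖M i k‖₊)
    (fun _ _ => zero_le) (Finset.mem_univ j)) ?_
  exact Finset.le_sup (f := fun i => ∑ j : Fin n, ‖M i j‖₊) (Finset.mem_univ i)

lemma norm_entry_le (M : Matrix (Fin n) (Fin n) ℂ) (i j : Fin n) : ‖M i j‖ ≤ ‖M‖ :=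
  nnnorm_entry_le M i j

lemma nnnorm_le_of_entry_le {M : Matrix (Fin n) (Fin n) ℂ} {C : Matrix (Fin n) (Fin n) ℝ}
    (h : ∀ i j, ‖M i j‖ ≤ C i j) : ‖M‖₊ ≤ ‖cmap C‖₊ := by
  rw [Matrix.linfty_opNNNorm_def, Matrix.linfty_opNNNorm_def]
  refine Finset.sup_mono_fun fun i _ => Finset.sum_le_sum fun j _ => ?_
  have h0 : 0 ≤ C i j := le_trans (norm_nonneg _) (h i j)
  have : ‖(cmap C) i j‖ = C i j := by simp [cmap, Complex.norm_real, abs_of_nonneg h0]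
  rw [← NNReal.coe_le_coe]
  simp only [coe_nnnorm, this]
  exact (h i j).trans_eq (by simp [cmap, Complex.norm_real, abs_of_nonneg h0])

lemma abs_pow_entry_le {M : Matrix (Fin n) (Fin n) ℂ} {C : Matrix (Fin n) (Fin n) ℝ}
    (h : ∀ i j, ‖M i j‖ ≤ C i j) (k : ℕ) (i j : Fin n) :
    ‖(M ^ k) i j‖ ≤ (C ^ k) i j := by
  induction k generalizing i j with
  | zero =>
    simp only [pow_zero, Matrix.one_apply]
    split <;> simp
  | succ k ih =>
    rw [pow_succ, pow_succ, Matrix.mul_apply, Matrix.mul_apply]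
    refine le_trans (norm_sum_le _ _) (Finset.sum_le_sum fun l _ => ?_)
    rw [norm_mul]
    exact mul_le_mul (ih i l) (h l j) (norm_nonneg _)
      (le_trans (norm_nonneg _) (ih i l))

lemma spectralRadius_mono {M : Matrix (Fin n) (Fin n) ℂ} {C : Matrix (Fin n) (Fin n) ℝ}
    (h : ∀ i j, ‖M i j‖ ≤ C i j) :
    spectralRadius ℂ M ≤ spectralRadius ℂ (cmap C) := by
  refine le_of_tendsto_of_tendsto'
    (spectrum.pow_nnnorm_pow_one_div_tendsto_nhds_spectralRadius M)
    (spectrum.pow_nnnorm_pow_one_div_tendsto_nhds_spectralRadius (cmap C)) (fun k => ?_)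
  have hle : ‖M ^ k‖₊ ≤ ‖(cmap C) ^ k‖₊ := by
    rw [← cmap_pow]; exact nnnorm_le_of_entry_le (fun i j => abs_pow_entry_le h k i j)
  exact ENNReal.rpow_le_rpow (by exact_mod_cast hle) (by positivity)

end Norms


section SpecRadDef

lemma specRad_set_eq (B : Matrix (Fin n) (Fin n) ℝ) :
    {x : ℝ | ∃ μ ∈ spectrum ℂ (B.map Complex.ofReal), x = ‖μ‖}
      = (fun μ : ℂ => ‖μ‖) '' spectrum ℂ (cmap B) := by
  ext x
  simp only [Set.mem_setOf_eq, Set.mem_image, cmap]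
  constructor
  · rintro ⟨μ, hμ, rfl⟩; exact ⟨μ, hμ, rfl⟩
  · rintro ⟨μ, hμ, rfl⟩; exact ⟨μ, hμ, rfl⟩

lemma exists_max_abs [Nonempty (Fin n)] (B : Matrix (Fin n) (Fin n) ℝ) :
    ∃ lam ∈ spectrum ℂ (cmap B), ‖lam‖ = specRad B ∧
      ∀ μ ∈ spectrum ℂ (cmap B), ‖μ‖ ≤ ‖lam‖ := by
  have hne : (spectrum ℂ (cmap B)).Nonempty := spectrum.nonempty _
  have hcpt : IsCompact (spectrum ℂ (cmap B)) := spectrum.isCompact _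
  obtain ⟨lam, hlam, hmax⟩ := hcpt.exists_isMaxOn hne continuous_norm.continuousOn
  refine ⟨lam, hlam, ?_, fun μ hμ => hmax hμ⟩
  rw [specRad, specRad_set_eq]
  refine le_antisymm ?_ ?_
  · exact le_csSup ((hcpt.image continuous_norm).bddAbove) ⟨lam, hlam, rfl⟩
  · exact csSup_le (hne.image _) (by rintro x ⟨μ, hμ, rfl⟩; exact hmax hμ)

lemma abs_le_specRad [Nonempty (Fin n)] {B : Matrix (Fin n) (Fin n) ℝ} {μ : ℂ}
    (hμ : μ ∈ spectrum ℂ (cmap B)) : ‖μ‖ ≤ specRad B := by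
  obtain ⟨lam, _, he, hmax⟩ := exists_max_abs B
  exact (hmax μ hμ).trans he.le

lemma specRad_nonneg [Nonempty (Fin n)] (B : Matrix (Fin n) (Fin n) ℝ) : 0 ≤ specRad B := by
  obtain ⟨lam, _, he, _⟩ := exists_max_abs B
  exact he ▸ norm_nonneg lam

lemma spectralRadius_cmap_eq [Nonempty (Fin n)] (B : Matrix (Fin n) (Fin n) ℝ) :
    spectralRadius ℂ (cmap B) = ENNReal.ofReal (specRad B) := by
  obtain ⟨lam, hlam, he, hmax⟩ := exists_max_abs B
  have key : ∀ μ : ℂ, ENNReal.ofReal (‖μ‖) = (‖μ‖₊ : ℝ≥0∞) := by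
    intro μ; rw [ofReal_norm, enorm_eq_nnnorm]
  rw [spectralRadius, ← he, key lam]
  refine le_antisymm (iSup₂_le fun μ hμ => ?_) (le_iSup₂ (f := fun μ _ => (‖μ‖₊ : ℝ≥0∞)) lam hlam)
  rw [← key μ, ← key lam]
  exact ENNReal.ofReal_le_ofReal (hmax μ hμ)

lemma specRad_le_of_entry_le [Nonempty (Fin n)] {B C : Matrix (Fin n) (Fin n) ℝ}
    (h : ∀ i j, |B i j| ≤ C i j) : specRad B ≤ specRad C := by
  have := spectralRadius_mono (M := cmap B) (C := C) (fun i j => by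
    simpa [cmap, Complex.norm_real] using h i j)
  rw [spectralRadius_cmap_eq, spectralRadius_cmap_eq] at this
  exact (ENNReal.ofReal_le_ofReal_iff (specRad_nonneg C)).mp this

lemma isUnit_smul_one_sub_of_specRad_lt [Nonempty (Fin n)] {B : Matrix (Fin n) (Fin n) ℝ}
    {z : ℂ} (hz : specRad B < ‖z‖) :
    IsUnit (z • (1 : Matrix (Fin n) (Fin n) ℂ) - cmap B) := by
  have hmem : z ∉ spectrum ℂ (cmap B) := fun h => absurd (abs_le_specRad h) (not_le.mpr hz)
  rw [spectrum.mem_iff, not_not] at hmem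
  simpa [Algebra.algebraMap_eq_smul_one] using hmem

end SpecRadDef


section Neumann

open Filter

lemma tendsto_entry {f : ℕ → Matrix (Fin n) (Fin n) ℂ} {L : Matrix (Fin n) (Fin n) ℂ}
    (h : Tendsto f atTop (nhds L)) (i j : Fin n) :
    Tendsto (fun N => f N i j) atTop (nhds (L i j)) := by
  rw [tendsto_iff_norm_sub_tendsto_zero]; replace h := tendsto_iff_norm_sub_tendsto_zero.1 h
  refine squeeze_zero (fun N => norm_nonneg _) (fun N => ?_) h
  calc ‖f N i j - L i j‖ = ‖(f N - L) i j‖ := by simp [Matrix.sub_apply]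
    _ ≤ ‖f N - L‖ := norm_entry_le _ i j

lemma hasSum_resolvent {M : Matrix (Fin n) (Fin n) ℂ} {z : ℂ}
    (hz : spectralRadius ℂ M < (‖z‖₊ : ℝ≥0∞)) :
    HasSum (fun k : ℕ => z⁻¹ ^ (k + 1) • M ^ k) ((z • 1 - M)⁻¹) := by
  have hz0 : z ≠ 0 := by
    rintro rfl; simp at hz
  have hy : (‖z⁻¹‖₊ : ℝ≥0∞) < (spectralRadius ℂ M)⁻¹ := by
    rw [nnnorm_inv, ENNReal.coe_inv (by simpa using hz0)]
    exact ENNReal.inv_lt_inv.mpr hz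
  obtain ⟨r, hr1, hr2⟩ := ENNReal.lt_iff_exists_nnreal_btwn.mp hy
  have hr0 : (0 : ℝ) < (r : ℝ) := by
    have : (0 : ℝ≥0∞) ≤ (‖z⁻¹‖₊ : ℝ≥0∞) := zero_le
    exact_mod_cast (this.trans_lt hr1)
  have hball : HasFPowerSeriesOnBall (fun w : ℂ => Ring.inverse (1 - w • M))
      (fun k => ContinuousMultilinearMap.mkPiRing ℂ (Fin k) (M ^ k)) 0 r :=
    (spectrum.hasFPowerSeriesOnBall_inverse_one_sub_smul ℂ M).exchange_radius
      ((spectrum.differentiableOn_inverse_one_sub_smul hr2).hasFPowerSeriesOnBall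
        (by exact_mod_cast hr0))
  have hmem : z⁻¹ ∈ Metric.eball (0 : ℂ) r := by
    rw [EMetric.mem_ball, edist_zero_right]
    exact_mod_cast hr1
  have hs := hball.hasSum hmem
  simp only [ContinuousMultilinearMap.mkPiRing_apply, Finset.prod_const, Finset.card_univ,
    Fintype.card_fin, zero_add] at hs
  -- hs : HasSum (fun k => z⁻¹ ^ k • M ^ k) (Ring.inverse (1 - z⁻¹ • M))
  have hu : IsUnit ((1 : Matrix (Fin n) (Fin n) ℂ) - z⁻¹ • M) :=
    spectrum.isUnit_one_sub_smul_of_lt_inv_radius hy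
  have hinv : ((1 : Matrix (Fin n) (Fin n) ℂ) - z⁻¹ • M) * Ring.inverse (1 - z⁻¹ • M) = 1 :=
    Ring.mul_inverse_cancel _ hu
  have hfact : z • (1 : Matrix (Fin n) (Fin n) ℂ) - M = z • ((1 : Matrix (Fin n) (Fin n) ℂ) - z⁻¹ • M) := by
    rw [smul_sub, smul_smul, mul_inv_cancel₀ hz0, one_smul]
  have hmul : (z • (1 : Matrix (Fin n) (Fin n) ℂ) - M)
      * (z⁻¹ • Ring.inverse (1 - z⁻¹ • M)) = 1 := by
    rw [hfact, smul_mul_assoc, mul_smul_comm, hinv, smul_smul, mul_inv_cancel₀ hz0]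
    simp
  rw [Matrix.inv_eq_right_inv hmul]
  have h2 := hs.const_smul z⁻¹
  convert h2 using 2 with k
  · rfl
  · rfl
  rw [pow_succ', smul_smul]

end Neumann


section RealResolvent

open Filter

lemma entry_pow_nonneg {B : Matrix (Fin n) (Fin n) ℝ} (hB : ∀ i j, 0 ≤ B i j) (k : ℕ)
    (i j : Fin n) : 0 ≤ (B ^ k) i j := by
  have h : ∀ i j, ‖(cmap B) i j‖ ≤ B i j := fun i j => by
    simp [cmap, Complex.norm_real, abs_of_nonneg (hB i j)]
  calc (0:ℝ) ≤ ‖((cmap B) ^ k) i j‖ := norm_nonneg _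
    _ ≤ (B ^ k) i j := by
        have := abs_pow_entry_le h k i j
        exact this

lemma spectralRadius_lt_coe [Nonempty (Fin n)] {B : Matrix (Fin n) (Fin n) ℝ} {s : ℝ}
    (hs : specRad B < s) : spectralRadius ℂ (cmap B) < (‖(s : ℂ)‖₊ : ℝ≥0∞) := by
  have hs0 : 0 < s := (specRad_nonneg B).trans_lt hs
  have h1 : (‖(s : ℂ)‖₊ : ℝ≥0∞) = ENNReal.ofReal s := by
    rw [← enorm_eq_nnnorm, ← ofReal_norm]
    simp [Complex.norm_real, abs_of_nonneg hs0.le]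
  rw [spectralRadius_cmap_eq, h1]
  exact (ENNReal.ofReal_lt_ofReal_iff hs0).mpr hs

lemma smul_one_sub_cmap (B : Matrix (Fin n) (Fin n) ℝ) (s : ℝ) :
    (s : ℂ) • (1 : Matrix (Fin n) (Fin n) ℂ) - cmap B = cmap (s • 1 - B) := by
  rw [cmap_sub, cmap_smul, cmap_one]

lemma tendsto_real_resolvent_entry [Nonempty (Fin n)] {B : Matrix (Fin n) (Fin n) ℝ} {s : ℝ}
    (hs : specRad B < s) (i j : Fin n) :
    Tendsto (fun N => ∑ k ∈ Finset.range N, s⁻¹ ^ (k + 1) * (B ^ k) i j) atTop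
      (nhds (((s • 1 - B)⁻¹) i j)) := by
  have hc := (hasSum_resolvent (spectralRadius_lt_coe hs)).tendsto_sum_nat
  have hent := tendsto_entry hc i j
  have hrw : ∀ N, (∑ k ∈ Finset.range N, ((s : ℂ)⁻¹ ^ (k + 1) • (cmap B) ^ k)) i j
      = ((∑ k ∈ Finset.range N, s⁻¹ ^ (k + 1) * (B ^ k) i j : ℝ) : ℂ) := by
    intro N
    rw [Matrix.sum_apply]
    push_cast
    refine Finset.sum_congr rfl fun k _ => ?_
    rw [← cmap_pow]
    simp [cmap, Matrix.smul_apply, smul_eq_mul]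
  have hL : (((s : ℂ) • 1 - cmap B)⁻¹) i j = ((((s • 1 - B)⁻¹) i j : ℝ) : ℂ) := by
    rw [smul_one_sub_cmap, ← cmap_inv]; rfl
  simp only [hrw, hL] at hent
  exact Filter.tendsto_ofReal_iff.mp hent

lemma real_resolvent_entry_nonneg [Nonempty (Fin n)] {B : Matrix (Fin n) (Fin n) ℝ} {s : ℝ}
    (hB : ∀ i j, 0 ≤ B i j) (hs : specRad B < s) (i j : Fin n) :
    0 ≤ ((s • 1 - B)⁻¹) i j := by
  have hs0 : 0 < s := (specRad_nonneg B).trans_lt hs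
  refine le_of_tendsto_of_tendsto' tendsto_const_nhds (tendsto_real_resolvent_entry hs i j)
    fun N => Finset.sum_nonneg fun k _ => ?_
  exact mul_nonneg (pow_nonneg (inv_nonneg.mpr hs0.le) _) (entry_pow_nonneg hB k i j)

lemma real_resolvent_entry_mono [Nonempty (Fin n)] {B : Matrix (Fin n) (Fin n) ℝ} {s s' : ℝ}
    (hB : ∀ i j, 0 ≤ B i j) (hs : specRad B < s) (hss' : s ≤ s') (i j : Fin n) :
    ((s' • 1 - B)⁻¹) i j ≤ ((s • 1 - B)⁻¹) i j := by
  have hs0 : 0 < s := (specRad_nonneg B).trans_lt hs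
  refine le_of_tendsto_of_tendsto' (tendsto_real_resolvent_entry (hs.trans_le hss') i j)
    (tendsto_real_resolvent_entry hs i j) fun N => Finset.sum_le_sum fun k _ => ?_
  refine mul_le_mul_of_nonneg_right ?_ (entry_pow_nonneg hB k i j)
  exact pow_le_pow_left₀ (inv_nonneg.mpr (hs0.le.trans hss')) (inv_anti₀ hs0 hss') _

lemma complex_resolvent_entry_le [Nonempty (Fin n)] {B : Matrix (Fin n) (Fin n) ℝ} {z : ℂ}
    (hB : ∀ i j, 0 ≤ B i j) (hz : specRad B < ‖z‖) (i j : Fin n) :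
    ‖((z • 1 - cmap B)⁻¹) i j‖ ≤ (((‖z‖) • 1 - B)⁻¹) i j := by
  set s : ℝ := ‖z‖ with hsdef
  have hzc : spectralRadius ℂ (cmap B) < (‖z‖₊ : ℝ≥0∞) := by
    have := spectralRadius_lt_coe hz
    have habs : (‖(s : ℂ)‖₊ : ℝ≥0∞) = (‖z‖₊ : ℝ≥0∞) := by
      rw [← enorm_eq_nnnorm, ← enorm_eq_nnnorm, ← ofReal_norm, ← ofReal_norm]
      simp [Complex.norm_real, hsdef,
        abs_of_nonneg (norm_nonneg z)]
    rwa [habs] at this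
  have hcz := tendsto_entry (hasSum_resolvent hzc).tendsto_sum_nat i j
  have habs := (continuous_norm.tendsto _).comp hcz
  refine le_of_tendsto_of_tendsto' habs (tendsto_real_resolvent_entry hz i j) fun N => ?_
  simp only [Function.comp_apply, Matrix.sum_apply]
  refine le_trans (norm_sum_le _ _) (Finset.sum_le_sum fun k _ => ?_)
  rw [Matrix.smul_apply, smul_eq_mul, norm_mul, norm_pow, norm_inv]
  rw [← cmap_pow]
  have h1 : ‖(cmap (B ^ k)) i j‖ = (B ^ k) i j := by
    simp [cmap, Complex.norm_real, abs_of_nonneg (entry_pow_nonneg hB k i j)]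
  rw [h1]

end RealResolvent


section PF

open Filter

lemma nnnorm_entry_le_real (M : Matrix (Fin n) (Fin n) ℝ) (i j : Fin n) : ‖M i j‖₊ ≤ ‖M‖₊ := by
  rw [Matrix.linfty_opNNNorm_def]
  refine le_trans (Finset.single_le_sum (f := fun k => ‖M i k‖₊)
    (fun _ _ => zero_le) (Finset.mem_univ j)) ?_
  exact Finset.le_sup (f := fun i => ∑ j : Fin n, ‖M i j‖₊) (Finset.mem_univ i)

lemma tendsto_entry_real {f : ℕ → Matrix (Fin n) (Fin n) ℝ} {L : Matrix (Fin n) (Fin n) ℝ}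
    (h : Tendsto f atTop (nhds L)) (i j : Fin n) :
    Tendsto (fun N => f N i j) atTop (nhds (L i j)) := by
  rw [tendsto_iff_norm_sub_tendsto_zero]; replace h := tendsto_iff_norm_sub_tendsto_zero.1 h
  refine squeeze_zero (fun N => norm_nonneg _) (fun N => ?_) h
  calc ‖f N i j - L i j‖ = ‖(f N - L) i j‖ := by simp [Matrix.sub_apply]
    _ ≤ ‖f N - L‖ := nnnorm_entry_le_real _ i j

/-- Perron–Frobenius-type fact: for an entrywise-nonnegative real matrix, the spectral
radius is itself a (complex) eigenvalue. -/
lemma specRad_mem_spectrum [Nonempty (Fin n)] {B : Matrix (Fin n) (Fin n) ℝ}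
    (hB : ∀ i j, 0 ≤ B i j) : ((specRad B : ℝ) : ℂ) ∈ spectrum ℂ (cmap B) := by
  by_contra hr
  set r := specRad B with hrdef
  obtain ⟨lam, hlam, he, hmax⟩ := exists_max_abs B
  have hr0 : 0 ≤ r := specRad_nonneg B
  have hrpos : 0 < r := by
    rcases hr0.lt_or_eq with h | h
    · exact h
    · exfalso
      apply hr
      have hlam0 : lam = 0 := by
        have : ‖lam‖ = 0 := by rw [he, ← hrdef, ← h]
        exact norm_eq_zero.mp this
      have : ((r : ℝ) : ℂ) = 0 := by rw [← h]; norm_num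
      rw [this]
      exact hlam0 ▸ hlam
  -- invertibility of r • 1 - B over ℂ and ℝ
  have hrunit : IsUnit ((r : ℂ) • (1 : Matrix (Fin n) (Fin n) ℂ) - cmap B) := by
    rw [spectrum.notMem_iff, Algebra.algebraMap_eq_smul_one] at hr
    exact hr
  have hrunitR : IsUnit (r • (1 : Matrix (Fin n) (Fin n) ℝ) - B) := by
    rw [← isUnit_cmap_iff, ← smul_one_sub_cmap]
    exact hrunit
  -- the sequences
  set sk : ℕ → ℝ := fun k => (1 + 1 / (k + 1)) * r with hskdef
  have hsk_pos : ∀ k : ℕ, r < sk k := by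
    intro k
    have h1 : (0 : ℝ) < 1 / (k + 1) := by positivity
    have : (1 : ℝ) * r < (1 + 1 / (k + 1)) * r := by
      apply mul_lt_mul_of_pos_right _ hrpos
      linarith
    simpa [hskdef, one_div] using this
  have hsk_anti : ∀ k m : ℕ, k ≤ m → sk m ≤ sk k := by
    intro k m hkm
    have : (1 : ℝ) / (m + 1) ≤ 1 / (k + 1) := by
      apply one_div_le_one_div_of_le (by positivity)
      exact_mod_cast Nat.add_le_add_right hkm 1
    have := add_le_add_right this 1
    exact mul_le_mul_of_nonneg_right this hrpos.le
  have hsk_tendsto : Tendsto sk atTop (nhds r) := by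
    have h1 : Tendsto (fun k : ℕ => 1 + 1 / ((k : ℝ) + 1)) atTop (nhds 1) := by
      have := tendsto_one_div_add_atTop_nhds_zero_nat (𝕜 := ℝ)
      simpa using (tendsto_const_nhds (x := (1:ℝ))).add this
    have := h1.mul_const r
    simpa [hskdef, one_div] using this
  -- continuity of the real resolvent at r
  have hcont : Tendsto (fun k => Ring.inverse (sk k • (1 : Matrix (Fin n) (Fin n) ℝ) - B))
      atTop (nhds (Ring.inverse (r • (1 : Matrix (Fin n) (Fin n) ℝ) - B))) := by
    obtain ⟨u, hu⟩ := hrunitR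
    have hc1 : Continuous fun s : ℝ => s • (1 : Matrix (Fin n) (Fin n) ℝ) - B :=
      (continuous_id.smul continuous_const).sub continuous_const
    have hc2 : ContinuousAt Ring.inverse
        ((r • (1 : Matrix (Fin n) (Fin n) ℝ) - B)) := by
      rw [← hu]; exact NormedRing.inverse_continuousAt u
    exact (hc2.tendsto.comp ((hc1.tendsto r).comp hsk_tendsto))
  set G : Matrix (Fin n) (Fin n) ℝ := Ring.inverse (r • (1 : Matrix (Fin n) (Fin n) ℝ) - B)
    with hGdef
  -- entries of the real resolvents are bounded by entries of G
  have hGbound : ∀ k : ℕ, ∀ i j, ((sk k • (1 : Matrix (Fin n) (Fin n) ℝ) - B)⁻¹) i j ≤ G i j := by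
    intro k i j
    have hmono : Monotone fun m => ((sk m • (1 : Matrix (Fin n) (Fin n) ℝ) - B)⁻¹) i j := by
      intro a b hab
      exact real_resolvent_entry_mono hB (hsk_pos b) (hsk_anti a b hab) i j
    have htd : Tendsto (fun m => ((sk m • (1 : Matrix (Fin n) (Fin n) ℝ) - B)⁻¹) i j)
        atTop (nhds (G i j)) := by
      have := tendsto_entry_real hcont i j
      refine this.congr fun m => ?_
      rw [Matrix.nonsing_inv_eq_ringInverse]
    exact hmono.ge_of_tendsto htd k
  -- complex points
  set zk : ℕ → ℂ := fun k => ((1 + 1 / (k + 1) : ℝ) : ℂ) * lam with hzkdef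
  have habs_zk : ∀ k : ℕ, ‖zk k‖ = sk k := by
    intro k
    have h1 : (0 : ℝ) ≤ 1 + 1 / ((k : ℝ) + 1) := by positivity
    have h2 : ‖zk k‖ = |1 + 1 / ((k : ℝ) + 1)| * ‖lam‖ := by
      rw [hzkdef]
      simp only [norm_mul, Complex.norm_real, Real.norm_eq_abs]
    rw [h2, he, abs_of_nonneg h1, hskdef, ← hrdef]
  -- norm bound on complex resolvents
  set C : ℝ := ‖cmap G‖ with hCdef
  have hRk : ∀ k : ℕ, ‖(zk k • (1 : Matrix (Fin n) (Fin n) ℂ) - cmap B)⁻¹‖ ≤ C := by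
    intro k
    have h1 : ∀ i j, ‖((zk k • (1 : Matrix (Fin n) (Fin n) ℂ) - cmap B)⁻¹) i j‖
        ≤ G i j := by
      intro i j
      refine le_trans ?_ (hGbound k i j)
      have := complex_resolvent_entry_le hB (z := zk k) (by rw [habs_zk k]; exact hsk_pos k) i j
      rwa [habs_zk k] at this
    exact_mod_cast nnnorm_le_of_entry_le h1
  -- choose k large
  have hCpos : 0 ≤ C := norm_nonneg _
  obtain ⟨k, hk⟩ := exists_nat_gt (r * C)
  have hdiff : zk k - lam = ((1 / (k + 1) : ℝ) : ℂ) * lam := by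
    rw [hzkdef]
    push_cast
    ring
  have habsdiff : ‖zk k - lam‖ = 1 / (k + 1) * r := by
    rw [hdiff]
    simp only [norm_mul, Complex.norm_real, Real.norm_eq_abs]
    rw [he, ← hrdef, abs_of_nonneg (by positivity : (0:ℝ) ≤ 1 / ((k:ℝ) + 1))]
  have hsmall : ‖zk k - lam‖ * C < 1 := by
    rw [habsdiff]
    rw [div_mul_eq_mul_div, div_mul_eq_mul_div, one_mul]
    rw [div_lt_one (by positivity)]
    calc r * C < k := hk
      _ ≤ (k : ℝ) + 1 := by linarith
  -- the unit argument
  set Rk := (zk k • (1 : Matrix (Fin n) (Fin n) ℂ) - cmap B)⁻¹ with hRkdef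
  set t := (zk k - lam) • Rk with htdef
  have htlt : ‖t‖ < 1 := by
    rw [htdef, norm_smul]
    calc ‖zk k - lam‖ * ‖Rk‖ ≤ ‖zk k - lam‖ * C :=
          mul_le_mul_of_nonneg_left (hRk k) (norm_nonneg _)
      _ = ‖zk k - lam‖ * C := by rfl
      _ < 1 := hsmall
  have hunit1 : IsUnit ((1 : Matrix (Fin n) (Fin n) ℂ) - t) := (Units.oneSub t htlt).isUnit
  have hzkunit : IsUnit (zk k • (1 : Matrix (Fin n) (Fin n) ℂ) - cmap B) := by
    apply isUnit_smul_one_sub_of_specRad_lt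
    rw [habs_zk k]; exact hsk_pos k
  have hRkinv : (zk k • (1 : Matrix (Fin n) (Fin n) ℂ) - cmap B) * Rk = 1 :=
    Matrix.mul_nonsing_inv _ ((Matrix.isUnit_iff_isUnit_det _).mp hzkunit)
  have hfactor : (zk k • (1 : Matrix (Fin n) (Fin n) ℂ) - cmap B)
      * ((1 : Matrix (Fin n) (Fin n) ℂ) - t) = lam • 1 - cmap B := by
    rw [htdef, mul_sub, mul_one, mul_smul_comm, hRkinv,
      sub_right_comm, ← sub_smul, sub_sub_cancel]
  have hlamunit : IsUnit (lam • (1 : Matrix (Fin n) (Fin n) ℂ) - cmap B) := by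
    rw [← hfactor]
    exact hzkunit.mul hunit1
  have := spectrum.mem_iff.mp hlam
  rw [Algebra.algebraMap_eq_smul_one] at this
  exact this hlamunit

end PF


section MetzlerLayer

lemma mem_spectrum_shift {M : Matrix (Fin n) (Fin n) ℂ} {μ c : ℂ} :
    μ ∈ spectrum ℂ (M + c • 1) ↔ μ - c ∈ spectrum ℂ M := by
  rw [spectrum.mem_iff, spectrum.mem_iff, Algebra.algebraMap_eq_smul_one,
    Algebra.algebraMap_eq_smul_one]
  have h : μ • (1 : Matrix (Fin n) (Fin n) ℂ) - (M + c • 1)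
      = (μ - c) • (1 : Matrix (Fin n) (Fin n) ℂ) - M := by
    rw [sub_smul]; abel
  rw [h]

lemma mem_spectrum_smul {M : Matrix (Fin n) (Fin n) ℂ} {t μ : ℂ} (ht : t ≠ 0) :
    μ ∈ spectrum ℂ (t • M) ↔ μ / t ∈ spectrum ℂ M := by
  have h := spectrum.smul_mem_smul_iff (a := M) (s := μ / t) (r := Units.mk0 t ht)
  have h2 : (Units.mk0 t ht) • (μ / t) = μ := by
    simp only [Units.smul_def, Units.val_mk0, smul_eq_mul]
    field_simp
  have h3 : (Units.mk0 t ht) • M = t • M := rfl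
  rw [h2, h3] at h
  exact h

lemma metzler_shift_nonneg {Hm : Matrix (Fin n) (Fin n) ℝ} (hM : IsMetzler Hm) :
    ∀ i j, 0 ≤ (Hm + (1 + ∑ k, |Hm k k|) • (1 : Matrix (Fin n) (Fin n) ℝ)) i j := by
  intro i j
  rcases eq_or_ne i j with rfl | hij
  · have h1 : |Hm i i| ≤ ∑ k, |Hm k k| :=
      Finset.single_le_sum (f := fun k => |Hm k k|) (fun _ _ => abs_nonneg _) (Finset.mem_univ i)
    have h2 : -Hm i i ≤ |Hm i i| := neg_le_abs _
    simp only [Matrix.add_apply, Matrix.smul_apply, Matrix.one_apply_eq, smul_eq_mul, mul_one]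
    linarith
  · simp only [Matrix.add_apply, Matrix.smul_apply, Matrix.one_apply_ne hij, smul_eq_mul,
      mul_zero, add_zero]
    exact hM i j hij

lemma hurwitz_isUnit [Nonempty (Fin n)] {Hm : Matrix (Fin n) (Fin n) ℝ}
    (h : IsHurwitz Hm) : IsUnit Hm := by
  by_contra hu
  have h0 : (0 : ℂ) ∈ spectrum ℂ (cmap Hm) := by
    rw [spectrum.mem_iff, Algebra.algebraMap_eq_smul_one, zero_smul, zero_sub, IsUnit.neg_iff,
      isUnit_cmap_iff]
    exact hu
  simpa using h 0 h0

lemma hurwitz_iff_specRad_lt [Nonempty (Fin n)] {Hm : Matrix (Fin n) (Fin n) ℝ} {s : ℝ}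
    (hA : ∀ i j, 0 ≤ (Hm + s • (1 : Matrix (Fin n) (Fin n) ℝ)) i j) :
    IsHurwitz Hm ↔ specRad (Hm + s • 1) < s := by
  have hcm : cmap (Hm + s • (1 : Matrix (Fin n) (Fin n) ℝ)) = cmap Hm + (s : ℂ) • 1 := by
    rw [cmap_add, cmap_smul, cmap_one]
  constructor
  · intro hur
    have hmem := specRad_mem_spectrum hA
    rw [hcm, mem_spectrum_shift] at hmem
    have := hur _ hmem
    simpa using this
  · intro hlt μ hμ
    have hmem : μ + s ∈ spectrum ℂ (cmap (Hm + s • (1 : Matrix (Fin n) (Fin n) ℝ))) := by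
      rw [hcm, mem_spectrum_shift]
      simpa using hμ
    have h1 : ‖μ + s‖ ≤ specRad (Hm + s • 1) := abs_le_specRad hmem
    have h2 : (μ + s).re ≤ ‖μ + s‖ := Complex.re_le_norm _
    have h3 : (μ + s).re = μ.re + s := by simp
    linarith

lemma matrix_inv_neg (X : Matrix (Fin n) (Fin n) ℝ) : (-X)⁻¹ = -(X⁻¹) := by
  by_cases h : IsUnit X.det
  · refine Matrix.inv_eq_right_inv ?_
    rw [neg_mul_neg, Matrix.mul_nonsing_inv _ h]
  · have h2 : ¬IsUnit (-X).det := by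
      rw [Matrix.det_neg]
      intro hu
      rcases (isUnit_iff_ne_zero.mp hu).lt_or_gt with h' | h' <;>
        exact h (isUnit_iff_ne_zero.mpr (by intro h0; rw [h0, mul_zero] at h'; simp at h'))
    rw [Matrix.nonsing_inv_apply_not_isUnit _ h2, Matrix.nonsing_inv_apply_not_isUnit _ h,
      neg_zero]

/-- Key resolvent bounds: for a Metzler Hurwitz matrix `Hm` and `c ≥ 0`, the entries of
`-(Hm - c•1)⁻¹` are nonnegative and bounded by those of `-(Hm⁻¹)`. -/
lemma neg_resolvent_entries [Nonempty (Fin n)] {Hm : Matrix (Fin n) (Fin n) ℝ}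
    (hM : IsMetzler Hm) (hH : IsHurwitz Hm) {c : ℝ} (hc : 0 ≤ c) (i j : Fin n) :
    0 ≤ (-(Hm - c • 1)⁻¹) i j ∧ (-(Hm - c • 1)⁻¹) i j ≤ (-(Hm⁻¹)) i j := by
  set s : ℝ := 1 + ∑ k, |Hm k k| with hsdef
  set A : Matrix (Fin n) (Fin n) ℝ := Hm + s • 1 with hAdef
  have hA : ∀ i j, 0 ≤ A i j := metzler_shift_nonneg hM
  have hrad : specRad A < s := (hurwitz_iff_specRad_lt hA).mp hH
  have key : ∀ d : ℝ, 0 ≤ d → -(Hm - d • 1)⁻¹ = ((s + d) • 1 - A)⁻¹ := by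
    intro d hd
    have h1 : Hm - d • (1 : Matrix (Fin n) (Fin n) ℝ) = -((s + d) • 1 - A) := by
      rw [hAdef, add_smul]; abel
    rw [h1, matrix_inv_neg, neg_neg]
  have h0 : -(Hm⁻¹) = (s • 1 - A)⁻¹ := by
    have := key 0 le_rfl
    simpa using this
  constructor
  · rw [key c hc]
    exact real_resolvent_entry_nonneg hA (by linarith) i j
  · rw [key c hc, h0]
    exact real_resolvent_entry_mono hA hrad (by linarith) i j

end MetzlerLayer

end PMH


/-- Lemma 3 (Stability of Perturbed Metzler Matrices): for `H` Metzler and Hurwitz and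
`E ≥ 0`, `H + E` is Hurwitz iff `ρ(-E H⁻¹) < 1`. -/
theorem perturbed_metzler_hurwitz_iff_specRad_lt_one {n : ℕ} (H E : Matrix (Fin n) (Fin n) ℝ)
    (hHmetzler : IsMetzler H) (hHhurwitz : IsHurwitz H) (hE : ∀ i j, 0 ≤ E i j) :
    IsHurwitz (H + E) ↔ specRad (-(E * H⁻¹)) < 1 := by
  rcases Nat.eq_zero_or_pos n with hn | hn
  · subst hn
    constructor
    · intro _
      have hempty : {x : ℝ | ∃ μ ∈ spectrum ℂ ((-(E * H⁻¹)).map Complex.ofReal),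
          x = ‖μ‖} = ∅ := by
        ext x
        simp only [Set.mem_setOf_eq, Set.mem_empty_iff_false, iff_false, not_exists]
        rintro μ ⟨hμ, -⟩
        exact spectrum.mem_iff.mp hμ (isUnit_of_subsingleton _)
      rw [specRad, hempty, Real.sSup_empty]
      norm_num
    · intro _ μ hμ
      exact absurd (isUnit_of_subsingleton _) (spectrum.mem_iff.mp hμ)
  · haveI : Nonempty (Fin n) := ⟨⟨0, hn⟩⟩
    set s : ℝ := 1 + ∑ k, |H k k| with hsdef
    have hspos : 0 < s := by
      have h0 : 0 ≤ ∑ k, |H k k| := Finset.sum_nonneg fun k _ => abs_nonneg _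
      rw [hsdef]; linarith
    have hA : ∀ i j, 0 ≤ (H + s • (1 : Matrix (Fin n) (Fin n) ℝ)) i j :=
      PMH.metzler_shift_nonneg hHmetzler
    have hAE : ∀ i j, 0 ≤ ((H + E) + s • (1 : Matrix (Fin n) (Fin n) ℝ)) i j := by
      intro i j
      have h1 := hA i j
      have h2 := hE i j
      simp only [Matrix.add_apply] at h1 ⊢
      linarith
    have hHdet : IsUnit H.det :=
      (Matrix.isUnit_iff_isUnit_det H).mp (PMH.hurwitz_isUnit hHhurwitz)
    have hiff1 : IsHurwitz (H + E) ↔ specRad ((H + E) + s • 1) < s :=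
      PMH.hurwitz_iff_specRad_lt hAE
    have hP : ∀ i j, 0 ≤ (-(E * H⁻¹)) i j := by
      intro i j
      have hneg : (-(E * H⁻¹)) = E * (-(H⁻¹)) := (Matrix.mul_neg E H⁻¹).symm
      rw [hneg, Matrix.mul_apply]
      refine Finset.sum_nonneg fun k _ => mul_nonneg (hE i k) ?_
      have := (PMH.neg_resolvent_entries hHmetzler hHhurwitz (le_refl (0:ℝ)) k j).1
      simpa using this
    constructor
    · intro hur
      by_contra hge
      push_neg at hge
      set ρ : ℝ := specRad (-(E * H⁻¹)) with hρdef
      have hρ1 : 1 ≤ ρ := hge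
      have hρpos : 0 < ρ := lt_of_lt_of_le one_pos hρ1
      have hPmem := PMH.specRad_mem_spectrum hP
      set t : ℝ := ρ⁻¹ with htdef
      have ht0 : 0 < t := inv_pos.mpr hρpos
      have ht1 : t ≤ 1 := by rw [htdef]; exact inv_le_one_of_one_le₀ hρ1
      have h1mem : (1 : ℂ) ∈ spectrum ℂ (PMH.cmap (t • (-(E * H⁻¹)))) := by
        rw [PMH.cmap_smul, PMH.mem_spectrum_smul (by exact_mod_cast ht0.ne')]
        have heq1 : (1 : ℂ) / (t : ℂ) = ((ρ : ℝ) : ℂ) := by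
          rw [htdef]; push_cast; rw [one_div, inv_inv]
        rw [heq1]
        exact hPmem
      have hsing : ¬ IsUnit ((1 : Matrix (Fin n) (Fin n) ℝ) + t • (E * H⁻¹)) := by
        have hmem := spectrum.mem_iff.mp h1mem
        rw [Algebra.algebraMap_eq_smul_one, one_smul] at hmem
        rw [← PMH.isUnit_cmap_iff]
        have heq : PMH.cmap ((1 : Matrix (Fin n) (Fin n) ℝ) + t • (E * H⁻¹))
            = 1 - PMH.cmap (t • (-(E * H⁻¹))) := by
          rw [smul_neg, PMH.cmap_neg, sub_neg_eq_add, PMH.cmap_add, PMH.cmap_one]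
        rw [heq]
        exact hmem
      have hfac : H + t • E = ((1 : Matrix (Fin n) (Fin n) ℝ) + t • (E * H⁻¹)) * H := by
        rw [Matrix.add_mul, Matrix.one_mul, Matrix.smul_mul, Matrix.mul_assoc,
          Matrix.nonsing_inv_mul H hHdet, Matrix.mul_one]
      have hsing2 : ¬ IsUnit (H + t • E) := by
        intro hu
        apply hsing
        have hiu : IsUnit H⁻¹ := Matrix.isUnit_nonsing_inv_iff.mpr ((Matrix.isUnit_iff_isUnit_det H).mpr hHdet)
        have heq2 : ((1 : Matrix (Fin n) (Fin n) ℝ) + t • (E * H⁻¹)) = (H + t • E) * H⁻¹ := by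
          rw [hfac, Matrix.mul_assoc, Matrix.mul_nonsing_inv H hHdet, Matrix.mul_one]
        rw [heq2]
        exact hu.mul hiu
      have h0mem : (0 : ℂ) ∈ spectrum ℂ (PMH.cmap (H + t • E)) := by
        rw [spectrum.mem_iff, Algebra.algebraMap_eq_smul_one, zero_smul, zero_sub,
          IsUnit.neg_iff, PMH.isUnit_cmap_iff]
        exact hsing2
      have hsmem : ((s : ℝ) : ℂ) ∈ spectrum ℂ (PMH.cmap ((H + t • E) + s • 1)) := by
        have hcm : PMH.cmap ((H + t • E) + s • (1 : Matrix (Fin n) (Fin n) ℝ))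
            = PMH.cmap (H + t • E) + (s : ℂ) • 1 := by
          rw [PMH.cmap_add, PMH.cmap_smul, PMH.cmap_one]
        rw [hcm, PMH.mem_spectrum_shift, sub_self]
        exact h0mem
      have hle : s ≤ specRad ((H + t • E) + s • 1) := by
        have := PMH.abs_le_specRad hsmem
        rwa [Complex.norm_real, Real.norm_eq_abs, abs_of_nonneg hspos.le] at this
      have hmono : specRad ((H + t • E) + s • 1) ≤ specRad ((H + E) + s • 1) := by
        apply PMH.specRad_le_of_entry_le
        intro i j
        have h2 := hE i j
        have h1 := hA i j
        simp only [Matrix.add_apply, Matrix.smul_apply, smul_eq_mul] at h1 ⊢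
        have hnn : 0 ≤ H i j + t * E i j + s * (1 : Matrix (Fin n) (Fin n) ℝ) i j := by
          have := mul_nonneg ht0.le h2
          linarith
        rw [abs_of_nonneg hnn]
        have := mul_le_of_le_one_left h2 ht1
        linarith
      have hfin := hiff1.mp hur
      linarith
    · intro hlt
      rw [hiff1]
      by_contra hge
      push_neg at hge
      set r' : ℝ := specRad ((H + E) + s • 1) with hr'def
      have hr'mem := PMH.specRad_mem_spectrum hAE
      set c : ℝ := r' - s with hcdef
      have hc0 : 0 ≤ c := by rw [hcdef]; linarith
      have hcmem : ((c : ℝ) : ℂ) ∈ spectrum ℂ (PMH.cmap (H + E)) := by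
        have hcm : PMH.cmap ((H + E) + s • (1 : Matrix (Fin n) (Fin n) ℝ))
            = PMH.cmap (H + E) + (s : ℂ) • 1 := by
          rw [PMH.cmap_add, PMH.cmap_smul, PMH.cmap_one]
        have hmem := hr'mem
        rw [hcm, PMH.mem_spectrum_shift] at hmem
        have hcast : ((r' : ℝ) : ℂ) - (s : ℂ) = ((c : ℝ) : ℂ) := by
          rw [hcdef]; push_cast; ring
        rwa [hcast] at hmem
      have hHcH : IsHurwitz (H - c • 1) := by
        intro μ hμ
        have hcm : PMH.cmap (H - c • (1 : Matrix (Fin n) (Fin n) ℝ))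
            = PMH.cmap H + (-(c : ℂ)) • 1 := by
          rw [PMH.cmap_sub, PMH.cmap_smul, PMH.cmap_one, neg_smul, sub_eq_add_neg]
        have hmem : μ + (c : ℂ) ∈ spectrum ℂ (PMH.cmap H) := by
          have hx := hμ
          rw [show (H - c • (1 : Matrix (Fin n) (Fin n) ℝ)).map Complex.ofReal
            = PMH.cmap H + (-(c : ℂ)) • 1 from hcm, PMH.mem_spectrum_shift,
            sub_neg_eq_add] at hx
          exact hx
        have hre := hHhurwitz _ hmem
        have h4 : (μ + (c : ℂ)).re = μ.re + c := by simp
        rw [h4] at hre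
        linarith
      have hHcU : IsUnit (H - c • 1) := PMH.hurwitz_isUnit hHcH
      have hHcdet : IsUnit (H - c • (1 : Matrix (Fin n) (Fin n) ℝ)).det :=
        (Matrix.isUnit_iff_isUnit_det _).mp hHcU
      have hsing : ¬ IsUnit (H + E - c • (1 : Matrix (Fin n) (Fin n) ℝ)) := by
        have hmem := spectrum.mem_iff.mp hcmem
        rw [Algebra.algebraMap_eq_smul_one] at hmem
        intro hu
        apply hmem
        have heq : (c : ℂ) • (1 : Matrix (Fin n) (Fin n) ℂ) - PMH.cmap (H + E)
            = PMH.cmap (c • 1 - (H + E)) := by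
          rw [PMH.cmap_sub, PMH.cmap_smul, PMH.cmap_one]
        rw [heq, PMH.isUnit_cmap_iff]
        have heq2 : c • (1 : Matrix (Fin n) (Fin n) ℝ) - (H + E) = -(H + E - c • 1) := by abel
        rw [heq2, IsUnit.neg_iff]
        exact hu
      have hfac : H + E - c • (1 : Matrix (Fin n) (Fin n) ℝ)
          = ((1 : Matrix (Fin n) (Fin n) ℝ) + E * (H - c • 1)⁻¹) * (H - c • 1) := by
        rw [Matrix.add_mul, Matrix.one_mul, Matrix.mul_assoc,
          Matrix.nonsing_inv_mul _ hHcdet, Matrix.mul_one]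
        abel
      have hsing1 : ¬ IsUnit ((1 : Matrix (Fin n) (Fin n) ℝ) + E * (H - c • 1)⁻¹) := by
        intro hu
        exact hsing (hfac ▸ hu.mul hHcU)
      have h1mem : (1 : ℂ) ∈ spectrum ℂ (PMH.cmap (-(E * (H - c • 1)⁻¹))) := by
        rw [spectrum.mem_iff, Algebra.algebraMap_eq_smul_one, one_smul, PMH.cmap_neg,
          sub_neg_eq_add, ← PMH.cmap_one, ← PMH.cmap_add, PMH.isUnit_cmap_iff]
        exact hsing1
      have h1le : (1 : ℝ) ≤ specRad (-(E * (H - c • 1)⁻¹)) := by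
        have := PMH.abs_le_specRad h1mem
        simpa using this
      have hmono : specRad (-(E * (H - c • 1)⁻¹)) ≤ specRad (-(E * H⁻¹)) := by
        apply PMH.specRad_le_of_entry_le
        intro i j
        have hexp : (-(E * (H - c • 1)⁻¹)) i j = ∑ k, E i k * (-(H - c • 1)⁻¹) k j := by
          rw [← Matrix.mul_neg, Matrix.mul_apply]
        have hexp2 : (-(E * H⁻¹)) i j = ∑ k, E i k * (-(H⁻¹)) k j := by
          rw [← Matrix.mul_neg, Matrix.mul_apply]
        have hnn : 0 ≤ (-(E * (H - c • 1)⁻¹)) i j := by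
          rw [hexp]
          exact Finset.sum_nonneg fun k _ => mul_nonneg (hE i k)
            (PMH.neg_resolvent_entries hHmetzler hHhurwitz hc0 k j).1
        rw [abs_of_nonneg hnn, hexp, hexp2]
        exact Finset.sum_le_sum fun k _ => mul_le_mul_of_nonneg_left
          (PMH.neg_resolvent_entries hHmetzler hHhurwitz hc0 k j).2 (hE i k)
      linarith
end

section
/- Let F be an n×n real matrix with all entries nonnegative and let V be an n×n real matrix that is Metzler and Hurwitz. Then ρ(F V⁻¹) = inf { r ∈ ℝ : r > 0 and there exists a vector w ∈ ℝⁿ with all entries strictly positive such that (F + rV) w < 0 entrywise }. -/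
open Matrix Filter Topology Finset

namespace SpecRadProof

open scoped NNReal ENNReal

attribute [local instance] Matrix.linftyOpSeminormedAddCommGroup
  Matrix.linftyOpNormedAddCommGroup Matrix.linftyOpNormedRing Matrix.linftyOpNormedAlgebra
  Matrix.linftyOpNormedSpace

noncomputable section

variable {n : ℕ}

local instance : CompleteSpace (Matrix (Fin n) (Fin n) ℂ) := FiniteDimensional.complete ℂ _
local instance : CompleteSpace (Matrix (Fin n) (Fin n) ℝ) := FiniteDimensional.complete ℝ _

lemma map_eq (A : Matrix (Fin n) (Fin n) ℝ) :
    A.map Complex.ofReal = Complex.ofRealHom.mapMatrix A := rfl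

lemma entry_nnnorm_le {α : Type*} [SeminormedAddCommGroup α]
    (A : Matrix (Fin n) (Fin n) α) (i j : Fin n) : ‖A i j‖₊ ≤ ‖A‖₊ := by
  rw [Matrix.linfty_opNNNorm_def]
  exact le_trans
    (Finset.single_le_sum (f := fun k => ‖A i k‖₊) (fun k _ => zero_le) (Finset.mem_univ j))
    (Finset.le_sup (f := fun i => ∑ j, ‖A i j‖₊) (Finset.mem_univ i))

lemma entry_norm_le {α : Type*} [SeminormedAddCommGroup α]
    (A : Matrix (Fin n) (Fin n) α) (i j : Fin n) : ‖A i j‖ ≤ ‖A‖ :=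
  entry_nnnorm_le A i j

lemma entry_le_norm (A : Matrix (Fin n) (Fin n) ℝ) (i j : Fin n) : A i j ≤ ‖A‖ :=
  (le_abs_self _).trans (entry_norm_le A i j)

lemma norm_le_sum_entries (A : Matrix (Fin n) (Fin n) ℝ) :
    ‖A‖ ≤ ∑ i, ∑ j, |A i j| := by
  have : ‖A‖₊ ≤ ∑ i, ∑ j, ‖A i j‖₊ := by
    rw [Matrix.linfty_opNNNorm_def]
    exact Finset.sup_le fun i _ =>
      Finset.single_le_sum (f := fun i => ∑ j, ‖A i j‖₊) (fun k _ => zero_le) (Finset.mem_univ i)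
  calc ‖A‖ = ((‖A‖₊ : ℝ≥0) : ℝ) := rfl
    _ ≤ ((∑ i, ∑ j, ‖A i j‖₊ : ℝ≥0) : ℝ) := by exact_mod_cast this
    _ = ∑ i, ∑ j, |A i j| := by push_cast [Real.nnnorm_abs]; simp [Real.norm_eq_abs]

lemma nnnorm_map_ofReal (A : Matrix (Fin n) (Fin n) ℝ) : ‖A.map Complex.ofReal‖₊ = ‖A‖₊ := by
  rw [Matrix.linfty_opNNNorm_def, Matrix.linfty_opNNNorm_def]
  congr 1
  funext i
  apply Finset.sum_congr rfl
  intro j _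
  simp [Matrix.map_apply]

lemma norm_map_ofReal (A : Matrix (Fin n) (Fin n) ℝ) : ‖A.map Complex.ofReal‖ = ‖A‖ :=
  congrArg NNReal.toReal (nnnorm_map_ofReal A)

/-- The set of absolute values of eigenvalues. -/
lemma bddAbove_absSpec (a : Matrix (Fin n) (Fin n) ℂ) :
    BddAbove {x : ℝ | ∃ μ ∈ spectrum ℂ a, x = ‖μ‖} := by
  have : {x : ℝ | ∃ μ ∈ spectrum ℂ a, x = ‖μ‖} = (fun μ : ℂ => ‖μ‖) '' (spectrum ℂ a) := by
    ext x; simp [eq_comm, Set.mem_image]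
  rw [this]
  exact ((spectrum.isCompact a).image continuous_norm).bddAbove

lemma exists_max_abs (a : Matrix (Fin n) (Fin n) ℂ) (h : (spectrum ℂ a).Nonempty) :
    ∃ μ ∈ spectrum ℂ a, (∀ ν ∈ spectrum ℂ a, ‖ν‖ ≤ ‖μ‖) ∧
      sSup {x : ℝ | ∃ ν ∈ spectrum ℂ a, x = ‖ν‖} = ‖μ‖ := by
  obtain ⟨μ, hμ, hmax⟩ := (spectrum.isCompact a).exists_isMaxOn h
    (continuous_norm.continuousOn)
  refine ⟨μ, hμ, hmax, ?_⟩
  apply IsGreatest.csSup_eq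
  constructor
  · exact ⟨μ, hμ, rfl⟩
  · rintro x ⟨ν, hν, rfl⟩
    exact hmax hν

lemma specRad_nonneg (A : Matrix (Fin n) (Fin n) ℝ) : 0 ≤ specRad A := by
  apply Real.sSup_nonneg
  rintro x ⟨μ, _, rfl⟩
  exact norm_nonneg μ

lemma abs_le_specRad {A : Matrix (Fin n) (Fin n) ℝ} {μ : ℂ}
    (hμ : μ ∈ spectrum ℂ (A.map Complex.ofReal)) : ‖μ‖ ≤ specRad A :=
  le_csSup (bddAbove_absSpec _) ⟨μ, hμ, rfl⟩

lemma spectralRadius_le {a : Matrix (Fin n) (Fin n) ℂ} {r : ℝ}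
    (h : ∀ μ ∈ spectrum ℂ a, ‖μ‖ ≤ r) :
    spectralRadius ℂ a ≤ ENNReal.ofReal r := by
  rw [spectralRadius]
  apply iSup₂_le
  intro μ hμ
  have : (‖μ‖₊ : ℝ≥0∞) = ENNReal.ofReal (‖μ‖) := by
    rw [ofReal_norm_eq_enorm]; rfl
  rw [this]
  exact ENNReal.ofReal_le_ofReal (h μ hμ)

/-- Gelfand-type consequence: if all eigenvalue moduli are `≤ c < r`, then eventually
`‖a ^ k‖ ≤ r ^ k`. -/
lemma eventually_norm_pow_le {a : Matrix (Fin n) (Fin n) ℂ} {c r : ℝ} (hc : 0 ≤ c)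
    (hcr : c < r) (h : ∀ μ ∈ spectrum ℂ a, ‖μ‖ ≤ c) :
    ∀ᶠ k in atTop, ‖a ^ k‖ ≤ r ^ k := by
  have hr : 0 < r := lt_of_le_of_lt hc hcr
  have hlt : spectralRadius ℂ a < ENNReal.ofReal r :=
    lt_of_le_of_lt (spectralRadius_le h) (by exact_mod_cast ENNReal.ofReal_lt_ofReal_iff hr |>.mpr hcr)
  have htendsto := spectrum.pow_nnnorm_pow_one_div_tendsto_nhds_spectralRadius a
  have hev : ∀ᶠ k : ℕ in atTop, (‖a ^ k‖₊ : ℝ≥0∞) ^ (1 / (k : ℝ)) < ENNReal.ofReal r :=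
    htendsto.eventually_lt_const hlt
  filter_upwards [hev, eventually_ge_atTop 1] with k hk hk1
  have hkne : (k : ℝ) ≠ 0 := by positivity
  have h1 : ((‖a ^ k‖₊ : ℝ≥0∞) ^ (1 / (k : ℝ))) ^ (k : ℝ) ≤ (ENNReal.ofReal r) ^ (k : ℝ) :=
    ENNReal.rpow_le_rpow hk.le (by positivity)
  rw [← ENNReal.rpow_mul, one_div, inv_mul_cancel₀ hkne, ENNReal.rpow_one] at h1
  rw [ENNReal.ofReal_rpow_of_pos hr] at h1
  have h3 : ‖a ^ k‖ ≤ r ^ (k : ℝ) := by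
    have h4 := ENNReal.toReal_mono (by simp) h1
    rw [ENNReal.toReal_ofReal (by positivity)] at h4
    simpa [coe_nnnorm] using h4
  rwa [Real.rpow_natCast] at h3

/-- Geometric series in a complete normed ring, assuming absolute summability of powers. -/
lemma geom_inverse {R : Type*} [NormedRing R] [CompleteSpace R] {x : R}
    (h : Summable fun k => ‖x ^ k‖) :
    ∃ S : R, HasSum (fun k => x ^ k) S ∧ (1 - x) * S = 1 ∧ S * (1 - x) = 1 := by
  have hs : Summable fun k => x ^ k := Summable.of_norm h
  have hx0 : Tendsto (fun k : ℕ => x ^ k) atTop (𝓝 0) := hs.tendsto_atTop_zero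
  refine ⟨∑' k, x ^ k, hs.hasSum, ?_, ?_⟩
  · have h1 := (hs.hasSum.mul_left (1 - x)).tendsto_sum_nat
    have key : ∀ N, ∑ k ∈ Finset.range N, (1 - x) * x ^ k = 1 - x ^ N := by
      intro N
      have := Finset.sum_range_sub' (fun k => x ^ k) N
      simp only [pow_zero] at this
      rw [← this]
      apply Finset.sum_congr rfl
      intro k _
      rw [sub_mul, one_mul, pow_succ']
    simp_rw [key] at h1
    have h2 : Tendsto (fun N : ℕ => 1 - x ^ N) atTop (𝓝 (1 : R)) := by
      simpa using tendsto_const_nhds.sub hx0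
    exact tendsto_nhds_unique h1 h2
  · have h1 := (hs.hasSum.mul_right (1 - x)).tendsto_sum_nat
    have key : ∀ N, ∑ k ∈ Finset.range N, x ^ k * (1 - x) = 1 - x ^ N := by
      intro N
      have := Finset.sum_range_sub' (fun k => x ^ k) N
      simp only [pow_zero] at this
      rw [← this]
      apply Finset.sum_congr rfl
      intro k _
      rw [mul_sub, mul_one, pow_succ]
    simp_rw [key] at h1
    have h2 : Tendsto (fun N : ℕ => 1 - x ^ N) atTop (𝓝 (1 : R)) := by
      simpa using tendsto_const_nhds.sub hx0
    exact tendsto_nhds_unique h1 h2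

/-- From spectrum membership, produce an eigenvector. -/
lemma exists_eigenvector {a : Matrix (Fin n) (Fin n) ℂ} {μ : ℂ}
    (hμ : μ ∈ spectrum ℂ a) : ∃ x : Fin n → ℂ, x ≠ 0 ∧ a *ᵥ x = μ • x := by
  have hnu : ¬IsUnit (μ • (1 : Matrix (Fin n) (Fin n) ℂ) - a) := by
    rw [spectrum.mem_iff] at hμ
    rwa [Algebra.algebraMap_eq_smul_one] at hμ
  have hdet : (μ • (1 : Matrix (Fin n) (Fin n) ℂ) - a).det = 0 := by
    by_contra hd
    exact hnu ((Matrix.isUnit_iff_isUnit_det _).mpr (isUnit_iff_ne_zero.mpr hd))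
  obtain ⟨v, hv, hveq⟩ := (Matrix.exists_mulVec_eq_zero_iff).mpr hdet
  refine ⟨v, hv, ?_⟩
  have := hveq
  rw [Matrix.sub_mulVec, sub_eq_zero] at this
  rw [← this, Matrix.smul_mulVec, Matrix.one_mulVec]

/-- Collatz–Wielandt style upper bound on eigenvalue moduli. -/
lemma abs_eig_lt {A : Matrix (Fin n) (Fin n) ℂ} {P : Matrix (Fin n) (Fin n) ℝ}
    (hP : ∀ i j, ‖A i j‖ ≤ P i j) {u : Fin n → ℝ} (hu : ∀ i, 0 < u i)
    {r : ℝ} (hr : ∀ i, (P *ᵥ u) i < r * u i) :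
    ∀ μ ∈ spectrum ℂ A, ‖μ‖ < r := by
  intro μ hμ
  obtain ⟨x, hx0, hx⟩ := exists_eigenvector hμ
  haveI : Nonempty (Fin n) := by
    by_contra hne
    exact hx0 (funext fun i => absurd (Nonempty.intro i) hne)
  -- pick index maximizing |x i| / u i
  obtain ⟨i₀, -, hi₀⟩ := Finset.exists_max_image Finset.univ
    (fun i => ‖x i‖ / u i) ⟨Classical.arbitrary (Fin n), Finset.mem_univ _⟩
  set t := ‖x i₀‖ / u i₀ with ht
  have htpos : 0 < t := by
    obtain ⟨j, hj⟩ : ∃ j, x j ≠ 0 := by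
      by_contra hc
      push_neg at hc
      exact hx0 (funext hc)
    have : 0 < ‖x j‖ / u j := div_pos (by simpa using hj) (hu j)
    exact lt_of_lt_of_le this (hi₀ j (Finset.mem_univ j))
  have hle : ∀ j, ‖x j‖ ≤ t * u j := by
    intro j
    have := hi₀ j (Finset.mem_univ j)
    calc ‖x j‖ = ‖x j‖ / u j * u j :=
          (div_mul_cancel₀ _ (hu j).ne').symm
      _ ≤ t * u j := mul_le_mul_of_nonneg_right this (hu j).le
  have hxi₀ : ‖x i₀‖ = t * u i₀ := by
    rw [ht, div_mul_cancel₀ _ (hu i₀).ne']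
  have key : ‖μ‖ * (t * u i₀) < r * (t * u i₀) := by
    calc ‖μ‖ * (t * u i₀) = ‖μ‖ * ‖x i₀‖ := by rw [hxi₀]
      _ = ‖(A *ᵥ x) i₀‖ := by
          rw [hx]; simp [Pi.smul_apply, smul_eq_mul]
      _ ≤ ∑ j, ‖A i₀ j‖ * ‖x j‖ := by
          simp only [Matrix.mulVec, dotProduct]
          refine le_trans (norm_sum_le _ _) ?_
          apply le_of_eq
          exact Finset.sum_congr rfl fun j _ => norm_mul _ _
      _ ≤ ∑ j, P i₀ j * (t * u j) := by
          apply Finset.sum_le_sum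
          intro j _
          exact mul_le_mul (hP i₀ j) (hle j) (norm_nonneg _)
            ((norm_nonneg _).trans (hP i₀ j))
      _ = t * (P *ᵥ u) i₀ := by
          simp only [Matrix.mulVec, dotProduct]; rw [Finset.mul_sum]
          exact Finset.sum_congr rfl fun j _ => by ring
      _ < t * (r * u i₀) := mul_lt_mul_of_pos_left (hr i₀) htpos
      _ = r * (t * u i₀) := by ring
  have : 0 < t * u i₀ := mul_pos htpos (hu i₀)
  exact lt_of_mul_lt_mul_right key this.le

/-- Entry evaluation as a continuous linear map (w.r.t. the linfty operator norm). -/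
def entryCLM (i j : Fin n) : Matrix (Fin n) (Fin n) ℝ →L[ℝ] ℝ :=
  LinearMap.mkContinuous
    { toFun := fun A => A i j
      map_add' := fun A B => rfl
      map_smul' := fun c A => rfl } 1
    (fun A => by rw [one_mul]; exact entry_norm_le A i j)

lemma pow_entry_nonneg {A : Matrix (Fin n) (Fin n) ℝ} (hA : ∀ i j, 0 ≤ A i j) :
    ∀ k i j, 0 ≤ (A ^ k) i j := by
  intro k
  induction k with
  | zero =>
    intro i j
    rw [pow_zero]
    by_cases h : i = j <;> simp [Matrix.one_apply, h]
  | succ k ih =>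
    intro i j
    rw [pow_succ, Matrix.mul_apply]
    exact Finset.sum_nonneg fun l _ => mul_nonneg (ih i l) (hA l j)

lemma smul_pow_entry (A : Matrix (Fin n) (Fin n) ℝ) (r : ℝ) (k : ℕ) (i j : Fin n) :
    ((r • A) ^ k) i j = r ^ k * (A ^ k) i j := by
  rw [smul_pow, Matrix.smul_apply, smul_eq_mul]

/-- The Neumann series for `(1 - r⁻¹ A)⁻¹` for a nonnegative matrix `A` with `specRad A < r`. -/
lemma neumann {A : Matrix (Fin n) (Fin n) ℝ} (hA : ∀ i j, 0 ≤ A i j) {r : ℝ}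
    (hρ : specRad A < r) :
    ∃ S : Matrix (Fin n) (Fin n) ℝ,
      (∀ i j, (1 : Matrix (Fin n) (Fin n) ℝ) i j ≤ S i j) ∧
      (∀ i j, 0 ≤ S i j) ∧
      (∀ N i j, ∑ k ∈ Finset.range N, ((r⁻¹ • A) ^ k) i j ≤ S i j) ∧
      (1 - r⁻¹ • A) * S = 1 ∧ S * (1 - r⁻¹ • A) = 1 := by
  have hr0 : 0 < r := lt_of_le_of_lt (specRad_nonneg A) hρ
  set c := (specRad A + r) / 2 with hc
  have hc0 : 0 ≤ c := div_nonneg (add_nonneg (specRad_nonneg A) hr0.le) two_pos.le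
  have hcr : c < r := by rw [hc]; linarith
  have hρc : specRad A < c := by rw [hc]; linarith
  have hevC := eventually_norm_pow_le (specRad_nonneg A) hρc (fun μ hμ => abs_le_specRad hμ)
  have hev : ∀ᶠ k : ℕ in atTop, ‖(r⁻¹ • A) ^ k‖ ≤ (c / r) ^ k := by
    filter_upwards [hevC] with k hk
    have h1 : (A.map Complex.ofReal) ^ k = (A ^ k).map Complex.ofReal := by
      rw [map_eq, map_eq, ← map_pow]
    rw [h1, norm_map_ofReal] at hk
    rw [smul_pow, norm_smul, norm_pow, Real.norm_eq_abs, abs_of_pos (inv_pos.mpr hr0),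
      div_pow, div_eq_mul_inv, mul_comm ((c : ℝ) ^ k), ← inv_pow]
    exact mul_le_mul_of_nonneg_left hk (by positivity)
  have hsum : Summable fun k => ‖(r⁻¹ • A) ^ k‖ := by
    apply Summable.of_norm_bounded_eventually_nat (g := fun k => (c / r) ^ k)
      (summable_geometric_of_lt_one (div_nonneg hc0 hr0.le) ((div_lt_one hr0).mpr hcr))
    filter_upwards [hev] with k hk
    rwa [Real.norm_eq_abs, abs_of_nonneg (norm_nonneg _)]
  obtain ⟨S, hS, hlS, hrS⟩ := geom_inverse hsum
  have hentry : ∀ i j, HasSum (fun k => ((r⁻¹ • A) ^ k) i j) (S i j) := fun i j => by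
    exact (entryCLM i j).hasSum hS
  have hpos : ∀ k i j, 0 ≤ ((r⁻¹ • A) ^ k) i j := by
    intro k i j
    rw [smul_pow_entry]
    exact mul_nonneg (by positivity) (pow_entry_nonneg hA k i j)
  refine ⟨S, ?_, ?_, ?_, hlS, hrS⟩
  · intro i j
    have := le_hasSum (hentry i j) 0 (fun k _ => hpos k i j)
    simpa using this
  · intro i j
    exact (hentry i j).nonneg (fun k => hpos k i j)
  · intro N i j
    exact sum_le_hasSum (Finset.range N) (fun k _ => hpos k i j) (hentry i j)

lemma map_smul_one_sub (A : Matrix (Fin n) (Fin n) ℝ) (ρ : ℝ) :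
    ((ρ • (1 : Matrix (Fin n) (Fin n) ℝ) - A).map Complex.ofReal)
      = algebraMap ℂ (Matrix (Fin n) (Fin n) ℂ) (ρ : ℂ) - A.map Complex.ofReal := by
  rw [Algebra.algebraMap_eq_smul_one]
  ext i j
  by_cases h : i = j <;>
    simp [Matrix.map_apply, Matrix.sub_apply, Matrix.smul_apply, Matrix.one_apply, h,
      smul_eq_mul]

/-- Not-membership of `specRad A` in the complex spectrum gives real invertibility. -/
lemma isUnit_smul_one_sub {A : Matrix (Fin n) (Fin n) ℝ} {ρ : ℝ}
    (h : (ρ : ℂ) ∉ spectrum ℂ (A.map Complex.ofReal)) :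
    IsUnit (ρ • (1 : Matrix (Fin n) (Fin n) ℝ) - A) := by
  have hC : IsUnit (algebraMap ℂ (Matrix (Fin n) (Fin n) ℂ) (ρ : ℂ) - A.map Complex.ofReal) := by
    by_contra hc
    exact h hc
  rw [← map_smul_one_sub] at hC
  have hdetC := (Matrix.isUnit_iff_isUnit_det _).mp hC
  rw [map_eq] at hdetC
  rw [← RingHom.map_det] at hdetC
  apply (Matrix.isUnit_iff_isUnit_det _).mpr
  apply isUnit_iff_ne_zero.mpr
  intro h0
  rw [h0] at hdetC
  simp at hdetC

/-- **Perron–Frobenius**: for an entrywise nonnegative matrix, the spectral radius is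
an eigenvalue. -/
lemma specRad_mem_spectrum (hn : 0 < n) {A : Matrix (Fin n) (Fin n) ℝ}
    (hA : ∀ i j, 0 ≤ A i j) :
    (specRad A : ℂ) ∈ spectrum ℂ (A.map Complex.ofReal) := by
  haveI : Nonempty (Fin n) := Fin.pos_iff_nonempty.mp hn
  have hne : (spectrum ℂ (A.map Complex.ofReal)).Nonempty := spectrum.nonempty _
  obtain ⟨μ₀, hμ₀, hmax, hsup⟩ := exists_max_abs _ hne
  have hρval : specRad A = ‖μ₀‖ := hsup
  by_contra hmem
  rcases eq_or_lt_of_le (specRad_nonneg A) with h0 | hρpos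
  · -- if specRad A = 0 then μ₀ = 0 and 0 ∈ spectrum
    have habs : ‖μ₀‖ = 0 := by rw [← hρval, ← h0]
    have hμz : μ₀ = 0 := by simpa using habs
    apply hmem
    have : ((specRad A : ℝ) : ℂ) = μ₀ := by rw [← h0, hμz]; norm_num
    rwa [this]
  set ρ := specRad A with hρdef
  have hunit : IsUnit (ρ • (1 : Matrix (Fin n) (Fin n) ℝ) - A) := isUnit_smul_one_sub hmem
  obtain ⟨U, hU⟩ := hunit
  -- resolvent function, continuous at ρ
  have hcont : ContinuousAt (fun t : ℝ => Ring.inverse (t • (1 : Matrix (Fin n) (Fin n) ℝ) - A)) ρ := by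
    have h1 : ContinuousAt (fun t : ℝ => t • (1 : Matrix (Fin n) (Fin n) ℝ) - A) ρ :=
      ((continuous_id.smul continuous_const).sub continuous_const).continuousAt
    have h2 : ContinuousAt Ring.inverse ((ρ • (1 : Matrix (Fin n) (Fin n) ℝ) - A)) := by
      rw [← hU]; exact NormedRing.inverse_continuousAt U
    exact ContinuousAt.comp (g := Ring.inverse) h2 h1
  -- a bound on the resolvent near ρ
  set C := ‖Ring.inverse (ρ • (1 : Matrix (Fin n) (Fin n) ℝ) - A)‖ + 1 with hC
  have hbound : ∀ᶠ t in 𝓝[>] ρ, ‖Ring.inverse (t • (1 : Matrix (Fin n) (Fin n) ℝ) - A)‖ ≤ C := by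
    have := hcont.tendsto.norm
    have hev : ∀ᶠ t in 𝓝 ρ, ‖Ring.inverse (t • (1 : Matrix (Fin n) (Fin n) ℝ) - A)‖ ≤ C := by
      apply this.eventually_le_const
      rw [hC]; linarith
    exact nhdsWithin_le_nhds hev
  -- for t > ρ, the Neumann series identifies the resolvent and gives entrywise bounds
  have hres : ∀ t : ℝ, ρ < t → ∀ N (i j : Fin n),
      ∑ k ∈ Finset.range N, ((t⁻¹ • A) ^ k) i j
        ≤ t * ‖Ring.inverse (t • (1 : Matrix (Fin n) (Fin n) ℝ) - A)‖ := by
    intro t ht N i j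
    have ht0 : 0 < t := lt_of_le_of_lt (specRad_nonneg A) ht
    obtain ⟨S, h1S, h0S, hpart, hlS, hrS⟩ := neumann hA ht
    -- t • 1 - A = t • (1 - t⁻¹ • A), inverse is t⁻¹ • S
    have hident : (t • (1 : Matrix (Fin n) (Fin n) ℝ) - A) * (t⁻¹ • S) = 1 := by
      have : t • (1 : Matrix (Fin n) (Fin n) ℝ) - A = t • (1 - t⁻¹ • A) := by
        rw [smul_sub, smul_smul, mul_inv_cancel₀ ht0.ne', one_smul]
      rw [this, Matrix.smul_mul, Matrix.mul_smul, smul_smul, mul_inv_cancel₀ ht0.ne', hlS, one_smul]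
    have hident' : (t⁻¹ • S) * (t • (1 : Matrix (Fin n) (Fin n) ℝ) - A) = 1 := by
      have : t • (1 : Matrix (Fin n) (Fin n) ℝ) - A = t • (1 - t⁻¹ • A) := by
        rw [smul_sub, smul_smul, mul_inv_cancel₀ ht0.ne', one_smul]
      rw [this, Matrix.smul_mul, Matrix.mul_smul, smul_smul, inv_mul_cancel₀ ht0.ne', hrS, one_smul]
    have hinv : Ring.inverse (t • (1 : Matrix (Fin n) (Fin n) ℝ) - A) = t⁻¹ • S := by
      exact Ring.inverse_unit
        (⟨t • (1 : Matrix (Fin n) (Fin n) ℝ) - A, t⁻¹ • S, hident, hident'⟩ :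
          (Matrix (Fin n) (Fin n) ℝ)ˣ)
    calc ∑ k ∈ Finset.range N, ((t⁻¹ • A) ^ k) i j ≤ S i j := hpart N i j
      _ = t * ((t⁻¹ • S) i j) := by
          rw [Matrix.smul_apply, smul_eq_mul, ← mul_assoc, mul_inv_cancel₀ ht0.ne', one_mul]
      _ ≤ t * ‖Ring.inverse (t • (1 : Matrix (Fin n) (Fin n) ℝ) - A)‖ := by
          apply mul_le_mul_of_nonneg_left _ ht0.le
          rw [← hinv]
          exact entry_le_norm _ i j
  -- conclude partial sums at ρ are bounded
  have hpsum : ∀ N (i j : Fin n), ∑ k ∈ Finset.range N, ((ρ⁻¹ • A) ^ k) i j ≤ (ρ + 1) * C := by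
    intro N i j
    have hev : ∀ᶠ t in 𝓝[>] ρ, ∑ k ∈ Finset.range N, ((t⁻¹ • A) ^ k) i j ≤ (ρ + 1) * C := by
      filter_upwards [hbound, Ioc_mem_nhdsGT (lt_add_one ρ)] with t hbt htIoc
      calc ∑ k ∈ Finset.range N, ((t⁻¹ • A) ^ k) i j
          ≤ t * ‖Ring.inverse (t • (1 : Matrix (Fin n) (Fin n) ℝ) - A)‖ := hres t htIoc.1 N i j
        _ ≤ (ρ + 1) * C := by
            apply mul_le_mul htIoc.2 hbt (norm_nonneg _) (by linarith)
    have hcont2 : Tendsto (fun t : ℝ => ∑ k ∈ Finset.range N, ((t⁻¹ • A) ^ k) i j) (𝓝 ρ)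
        (𝓝 (∑ k ∈ Finset.range N, ((ρ⁻¹ • A) ^ k) i j)) := by
      apply tendsto_finset_sum
      intro k _
      simp only [smul_pow_entry]
      exact ((continuousAt_inv₀ hρpos.ne').pow k).mul continuousAt_const
    exact le_of_tendsto (hcont2.mono_left nhdsWithin_le_nhds) hev
  -- entrywise summability at ρ
  have hsummable : ∀ i j : Fin n, Summable fun k => ((ρ⁻¹ • A) ^ k) i j := by
    intro i j
    apply summable_of_sum_range_le (c := (ρ + 1) * C)
    · intro k
      rw [smul_pow_entry]
      exact mul_nonneg (by positivity) (pow_entry_nonneg hA k i j)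
    · intro N
      exact hpsum N i j
  -- summability of norms
  have hnormsum : Summable fun k => ‖(ρ⁻¹ • A) ^ k‖ := by
    have hg : Summable (fun k => ∑ i, ∑ j, ((ρ⁻¹ • A) ^ k) i j) :=
      summable_sum fun i _ => summable_sum fun j _ => hsummable i j
    apply Summable.of_nonneg_of_le (fun k => norm_nonneg _) _ hg
    intro k
    refine (norm_le_sum_entries _).trans (le_of_eq ?_)
    refine Finset.sum_congr rfl fun i _ => Finset.sum_congr rfl fun j _ => ?_
    apply abs_of_nonneg
    rw [smul_pow_entry]
    exact mul_nonneg (by positivity) (pow_entry_nonneg hA k i j)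
  -- now invert `μ₀ • 1 - A.map` using the absolutely convergent Neumann series
  have hμ₀ne : μ₀ ≠ 0 := by
    intro h
    rw [h] at hρval
    simp only [norm_zero] at hρval
    exact hρpos.ne' (hρdef ▸ hρval)
  set y := μ₀⁻¹ • (A.map Complex.ofReal) with hy
  have hynorm : ∀ k : ℕ, ‖y ^ k‖ = ‖(ρ⁻¹ • A) ^ k‖ := by
    intro k
    have hmp : (A.map Complex.ofReal) ^ k = (A ^ k).map Complex.ofReal := by
      rw [map_eq, map_eq, ← map_pow]
    rw [hy, smul_pow, norm_smul, norm_pow, hmp, norm_map_ofReal,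
      smul_pow, norm_smul, norm_pow ρ⁻¹, Real.norm_eq_abs, abs_of_pos (inv_pos.mpr hρpos)]
    congr 2
    rw [norm_inv]
    congr 1
    rw [show ‖μ₀‖ = ‖μ₀‖ from rfl, ← hρval]
  have hysum : Summable fun k => ‖y ^ k‖ := by
    simpa only [hynorm] using hnormsum
  obtain ⟨S, hS, hlS, hrS⟩ := geom_inverse hysum
  apply hmem
  rw [spectrum.mem_iff] at hμ₀ ⊢
  intro hIsUnit
  apply hμ₀
  -- `algebraMap μ₀ - A.map = μ₀ • (1 - y)`
  have hfact : algebraMap ℂ (Matrix (Fin n) (Fin n) ℂ) μ₀ - A.map Complex.ofReal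
      = μ₀ • (1 - y) := by
    rw [Algebra.algebraMap_eq_smul_one, hy, smul_sub, smul_smul, mul_inv_cancel₀ hμ₀ne, one_smul]
  have hident : (algebraMap ℂ (Matrix (Fin n) (Fin n) ℂ) μ₀ - A.map Complex.ofReal)
      * (μ₀⁻¹ • S) = 1 := by
    rw [hfact, Matrix.smul_mul, Matrix.mul_smul, smul_smul, mul_inv_cancel₀ hμ₀ne, hlS, one_smul]
  have hident' : (μ₀⁻¹ • S) * (algebraMap ℂ (Matrix (Fin n) (Fin n) ℂ) μ₀ - A.map Complex.ofReal)
      = 1 := by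
    rw [hfact, Matrix.smul_mul, Matrix.mul_smul, smul_smul, inv_mul_cancel₀ hμ₀ne, hrS, one_smul]
  exact ⟨⟨_, μ₀⁻¹ • S, hident, hident'⟩, rfl⟩

lemma spec_nonempty (hn : 0 < n) (A : Matrix (Fin n) (Fin n) ℝ) :
    (spectrum ℂ (A.map Complex.ofReal)).Nonempty := by
  haveI : Nonempty (Fin n) := Fin.pos_iff_nonempty.mp hn
  exact spectrum.nonempty _

lemma specRad_neg (A : Matrix (Fin n) (Fin n) ℝ) : specRad (-A) = specRad A := by
  unfold specRad
  congr 1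
  have hmapneg : (-A).map Complex.ofReal = -(A.map Complex.ofReal) := by
    ext i j; simp [Matrix.map_apply]
  ext x
  rw [Set.mem_setOf_eq, Set.mem_setOf_eq, hmapneg]
  constructor
  · rintro ⟨μ, hμ, rfl⟩
    rw [← spectrum.neg_eq, Set.mem_neg] at hμ
    exact ⟨-μ, hμ, by simp⟩
  · rintro ⟨μ, hμ, rfl⟩
    refine ⟨-μ, ?_, by simp⟩
    rw [← spectrum.neg_eq, Set.mem_neg, neg_neg]
    exact hμ

/-- A Metzler Hurwitz matrix is invertible with entrywise nonpositive inverse. -/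
lemma metzler_hurwitz_inv (hn : 0 < n) {V : Matrix (Fin n) (Fin n) ℝ}
    (hVm : IsMetzler V) (hVh : IsHurwitz V) :
    IsUnit V.det ∧ ∀ i j, V⁻¹ i j ≤ 0 := by
  set s := 1 + ∑ i, |V i i| with hs
  have hsum0 : 0 ≤ ∑ i, |V i i| := Finset.sum_nonneg fun i _ => abs_nonneg _
  have hs1 : (1 : ℝ) ≤ s := by rw [hs]; linarith
  have hs0 : 0 < s := lt_of_lt_of_le one_pos hs1
  have hdiag : ∀ i, |V i i| ≤ s - 1 := by
    intro i
    rw [hs]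
    have := Finset.single_le_sum (f := fun i => |V i i|) (fun j _ => abs_nonneg _)
      (Finset.mem_univ i)
    linarith
  set B := V + s • (1 : Matrix (Fin n) (Fin n) ℝ) with hB
  have hB0 : ∀ i j, 0 ≤ B i j := by
    intro i j
    by_cases h : i = j
    · subst h
      have h1 := hdiag i
      have h2 := neg_abs_le (V i i)
      simp only [hB, Matrix.add_apply, Matrix.smul_apply, Matrix.one_apply_eq, smul_eq_mul,
        mul_one]
      linarith
    · simp only [hB, Matrix.add_apply, Matrix.smul_apply, Matrix.one_apply_ne h, smul_eq_mul,
        mul_zero, add_zero]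
      exact hVm i j h
  have hρB : specRad B < s := by
    have hmem := specRad_mem_spectrum hn hB0
    have hmap : B.map Complex.ofReal
        = algebraMap ℂ (Matrix (Fin n) (Fin n) ℂ) (s : ℂ) + V.map Complex.ofReal := by
      rw [Algebra.algebraMap_eq_smul_one]
      ext i j
      by_cases h : i = j <;>
        simp [hB, Matrix.map_apply, Matrix.add_apply, Matrix.smul_apply, Matrix.one_apply, h,
          smul_eq_mul, add_comm]
    rw [hmap, ← spectrum.singleton_add_eq] at hmem
    obtain ⟨a, ha, ν, hν, hsum⟩ := Set.mem_add.mp hmem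
    rw [Set.mem_singleton_iff] at ha
    subst ha
    have hre := hVh ν hν
    have hν' : ν = (specRad B : ℂ) - s := by rw [← hsum]; ring
    rw [hν'] at hre
    simp only [Complex.sub_re, Complex.ofReal_re] at hre
    linarith
  obtain ⟨S, h1S, h0S, hpart, hlS, hrS⟩ := neumann hB0 hρB
  have hkey : (1 : Matrix (Fin n) (Fin n) ℝ) - s⁻¹ • B = (-s⁻¹) • V := by
    rw [hB, smul_add, smul_smul, inv_mul_cancel₀ hs0.ne', one_smul]
    rw [neg_smul]
    abel
  have hVright : V * ((-s⁻¹) • S) = 1 := by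
    rw [Matrix.mul_smul, ← Matrix.smul_mul, ← hkey, hlS]
  have hVleft : ((-s⁻¹) • S) * V = 1 := by
    rw [Matrix.smul_mul, ← Matrix.mul_smul, ← hkey, hrS]
  refine ⟨Matrix.isUnit_det_of_right_inverse hVright, ?_⟩
  intro i j
  rw [Matrix.inv_eq_right_inv hVright, Matrix.smul_apply, smul_eq_mul]
  have h1 : (0:ℝ) ≤ S i j := h0S i j
  have h2 : (-s⁻¹ : ℝ) ≤ 0 := by
    rw [neg_nonpos]
    positivity
  exact mul_nonpos_of_nonpos_of_nonneg h2 h1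

end

end SpecRadProof

open SpecRadProof

/-- `ρ(F V⁻¹) = inf { r > 0 : ∃ w > 0 with (F + rV) w < 0 entrywise }`. -/
theorem specRad_eq_sInf_exists_pos_vec_lt {n : ℕ} (F V : Matrix (Fin n) (Fin n) ℝ)
    (hF : ∀ i j, 0 ≤ F i j) (hVmetzler : IsMetzler V) (hVhurwitz : IsHurwitz V) :
    specRad (F * V⁻¹) =
      sInf {r : ℝ | 0 < r ∧ ∃ w : Fin n → ℝ, (∀ i, 0 < w i) ∧
        ∀ i, ((F + r • V) *ᵥ w) i < 0} := by
  classical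
  rcases Nat.eq_zero_or_pos n with hn | hn
  · -- degenerate case `n = 0`
    subst hn
    have hspec : spectrum ℂ ((F * V⁻¹).map Complex.ofReal) = ∅ := by
      ext μ
      simp only [Set.mem_empty_iff_false, iff_false, spectrum.mem_iff, not_not]
      exact isUnit_of_subsingleton _
    have h1 : {x : ℝ | ∃ μ ∈ spectrum ℂ ((F * V⁻¹).map Complex.ofReal),
        x = ‖μ‖} = ∅ := by
      rw [hspec]; ext x; simp
    have h2 : {r : ℝ | 0 < r ∧ ∃ w : Fin 0 → ℝ, (∀ i, 0 < w i) ∧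
        ∀ i, ((F + r • V) *ᵥ w) i < 0} = Set.Ioi 0 := by
      ext r
      simp only [Set.mem_setOf_eq, Set.mem_Ioi]
      exact ⟨fun h => h.1, fun h => ⟨h, fun i => i.elim0, fun i => i.elim0, fun i => i.elim0⟩⟩
    rw [specRad, h1, Real.sSup_empty, h2, csInf_Ioi]
  · haveI : Nonempty (Fin n) := Fin.pos_iff_nonempty.mp hn
    obtain ⟨hVdet, hVinv⟩ := metzler_hurwitz_inv hn hVmetzler hVhurwitz
    set W : Matrix (Fin n) (Fin n) ℝ := -V⁻¹ with hW
    have hW0 : ∀ i j, 0 ≤ W i j := fun i j => by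
      have := hVinv i j
      simp only [hW, Matrix.neg_apply]
      linarith
    have hWV : W * (-V) = 1 := by
      rw [hW, Matrix.neg_mul, Matrix.mul_neg, neg_neg, Matrix.nonsing_inv_mul _ hVdet]
    have hVW : V * W = -1 := by
      rw [hW, Matrix.mul_neg, Matrix.mul_nonsing_inv _ hVdet]
    set M := F * W with hM
    have hM0 : ∀ i j, 0 ≤ M i j := fun i j => by
      rw [hM, Matrix.mul_apply]
      exact Finset.sum_nonneg fun k _ => mul_nonneg (hF i k) (hW0 k j)
    have hFVinv : F * V⁻¹ = -M := by
      rw [hM, hW, Matrix.mul_neg, neg_neg]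
    have hρeq : specRad (F * V⁻¹) = specRad M := by
      rw [hFVinv, specRad_neg]
    have hWrow : ∀ i, ∃ j, 0 < W i j := by
      intro i
      by_contra hc
      push_neg at hc
      have hrow0 : ∀ j, W i j = 0 := fun j => le_antisymm (hc j) (hW0 i j)
      have h1 : (W * (-V)) i i = 1 := by rw [hWV, Matrix.one_apply_eq]
      rw [Matrix.mul_apply] at h1
      have h2 : ∑ j, W i j * (-V) j i = 0 :=
        Finset.sum_eq_zero fun j _ => by rw [hrow0 j, zero_mul]
      rw [h2] at h1
      exact one_ne_zero h1.symm
    have hdir1 : ∀ r ∈ {r : ℝ | 0 < r ∧ ∃ w : Fin n → ℝ, (∀ i, 0 < w i) ∧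
        ∀ i, ((F + r • V) *ᵥ w) i < 0}, specRad M < r := by
      rintro r ⟨hr0, w, hw, hlt⟩
      set u : Fin n → ℝ := fun i => -((V *ᵥ w) i) with hu
      have hcomp : ∀ i, (F *ᵥ w) i + r * (V *ᵥ w) i < 0 := by
        intro i
        have := hlt i
        rwa [Matrix.add_mulVec, Matrix.smul_mulVec, Pi.add_apply, Pi.smul_apply,
          smul_eq_mul] at this
      have hFw0 : ∀ i, 0 ≤ (F *ᵥ w) i := fun i => by
        rw [Matrix.mulVec, dotProduct]
        exact Finset.sum_nonneg fun j _ => mul_nonneg (hF i j) (hw j).le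
      have hupos : ∀ i, 0 < u i := by
        intro i
        show 0 < -((V *ᵥ w) i)
        rw [neg_pos]
        by_contra h4
        push_neg at h4
        have h5 : 0 ≤ r * (V *ᵥ w) i := mul_nonneg hr0.le h4
        have h6 := hcomp i
        have h7 := hFw0 i
        linarith
      have hW_u : W *ᵥ u = w := by
        have h5 : u = (-V) *ᵥ w := by
          funext i
          show -((V *ᵥ w) i) = ((-V) *ᵥ w) i
          rw [Matrix.neg_mulVec, Pi.neg_apply]
        rw [h5, Matrix.mulVec_mulVec, hWV, Matrix.one_mulVec]
      have hMu : ∀ i, (M *ᵥ u) i < r * u i := by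
        intro i
        have hMu' : M *ᵥ u = F *ᵥ w := by
          rw [hM, ← Matrix.mulVec_mulVec, hW_u]
        rw [hMu']
        show (F *ᵥ w) i < r * -((V *ᵥ w) i)
        have h6 := hcomp i
        linarith
      have habs : ∀ μ ∈ spectrum ℂ ((F * V⁻¹).map Complex.ofReal), ‖μ‖ < r := by
        apply abs_eig_lt (P := M) ?_ hupos hMu
        intro i j
        rw [hFVinv]
        simp only [Matrix.map_apply, Matrix.neg_apply, Complex.ofReal_neg, norm_neg,
          Complex.norm_real, Real.norm_eq_abs]
        rw [abs_of_nonneg (hM0 i j)]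
      obtain ⟨μ₀, hμ₀, hmax, hsup⟩ := exists_max_abs ((F * V⁻¹).map Complex.ofReal)
        (spec_nonempty hn _)
      calc specRad M = specRad (F * V⁻¹) := hρeq.symm
        _ = ‖μ₀‖ := hsup
        _ < r := habs μ₀ hμ₀
    have hdir2 : ∀ r, specRad M < r → r ∈ {r : ℝ | 0 < r ∧ ∃ w : Fin n → ℝ, (∀ i, 0 < w i) ∧
        ∀ i, ((F + r • V) *ᵥ w) i < 0} := by
      intro r hr
      have hr0 : 0 < r := lt_of_le_of_lt (specRad_nonneg M) hr
      obtain ⟨S, h1S, h0S, hpart, hlS, hrS⟩ := neumann hM0 hr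
      set u : Fin n → ℝ := fun i => ∑ j, S i j with hu
      have hu1 : ∀ i, 1 ≤ u i := by
        intro i
        calc (1:ℝ) = (1 : Matrix (Fin n) (Fin n) ℝ) i i := (Matrix.one_apply_eq i).symm
          _ ≤ S i i := h1S i i
          _ ≤ ∑ j, S i j := Finset.single_le_sum (fun j _ => h0S i j) (Finset.mem_univ i)
      have hMS : M * S = r • S - r • 1 := by
        have h := hlS
        rw [Matrix.sub_mul, Matrix.one_mul, Matrix.smul_mul] at h
        have h2 : r⁻¹ • (M * S) = S - 1 := by
          rw [← h]; abel
        calc M * S = r • (r⁻¹ • (M * S)) := by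
              rw [smul_smul, mul_inv_cancel₀ hr0.ne', one_smul]
          _ = r • (S - 1) := by rw [h2]
          _ = r • S - r • 1 := smul_sub r S 1
      have huS : u = S *ᵥ (fun _ => 1) := by
        funext i
        simp [hu, Matrix.mulVec, dotProduct]
      have hMu : ∀ i, (M *ᵥ u) i = r * u i - r := by
        intro i
        rw [huS, Matrix.mulVec_mulVec, hMS, Matrix.sub_mulVec, Matrix.smul_mulVec,
          Matrix.smul_mulVec, Matrix.one_mulVec]
        simp only [Pi.sub_apply, Pi.smul_apply, smul_eq_mul, mul_one]
      set w := W *ᵥ u with hw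
      have hwpos : ∀ i, 0 < w i := by
        intro i
        obtain ⟨j, hj⟩ := hWrow i
        rw [hw, Matrix.mulVec, dotProduct]
        apply Finset.sum_pos'
          (fun k _ => mul_nonneg (hW0 i k) (zero_le_one.trans (hu1 k)))
          ⟨j, Finset.mem_univ j, mul_pos hj (lt_of_lt_of_le one_pos (hu1 j))⟩
      refine ⟨hr0, w, hwpos, ?_⟩
      intro i
      have hFw : F *ᵥ w = M *ᵥ u := by
        rw [hw, Matrix.mulVec_mulVec, ← hM]
      have hVw : V *ᵥ w = -u := by
        rw [hw, Matrix.mulVec_mulVec, hVW, Matrix.neg_mulVec, Matrix.one_mulVec]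
      rw [Matrix.add_mulVec, Matrix.smul_mulVec, Pi.add_apply, Pi.smul_apply,
        smul_eq_mul, hFw, hVw, hMu i]
      simp only [Pi.neg_apply]
      linarith
    have hset : {r : ℝ | 0 < r ∧ ∃ w : Fin n → ℝ, (∀ i, 0 < w i) ∧
        ∀ i, ((F + r • V) *ᵥ w) i < 0} = Set.Ioi (specRad M) :=
      Set.ext fun r => ⟨fun h => hdir1 r h, fun h => hdir2 r h⟩
    rw [hρeq, hset, csInf_Ioi]
end

section
/- Let F be an n×n real matrix with all entries nonnegative and let V be an n×n real matrix that is Metzler and Hurwitz. Then ρ(F V⁻¹) = inf { r ∈ ℝ : r > 0 and there exists a vector w ∈ ℝⁿ with all entries strictly positive such that (F + rV) w ≤ 0 entrywise }. -/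
open Matrix

set_option maxHeartbeats 1000000

open Filter

lemma mem_spec_iff {n : ℕ} (M : Matrix (Fin n) (Fin n) ℂ) (μ : ℂ) :
    μ ∈ spectrum ℂ M ↔ ∃ v, v ≠ 0 ∧ M *ᵥ v = μ • v := by
  rw [spectrum.mem_iff, Matrix.isUnit_iff_isUnit_det, isUnit_iff_ne_zero, not_ne_iff,
    ← Matrix.exists_mulVec_eq_zero_iff]
  constructor
  · rintro ⟨v, hv, h⟩
    refine ⟨v, hv, ?_⟩
    have := h
    rw [Matrix.sub_mulVec] at this
    have h2 : (algebraMap ℂ (Matrix (Fin n) (Fin n) ℂ)) μ *ᵥ v = μ • v := by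
      rw [Algebra.algebraMap_eq_smul_one, Matrix.smul_mulVec, Matrix.one_mulVec]
    rw [h2, sub_eq_zero] at this
    exact this.symm
  · rintro ⟨v, hv, h⟩
    refine ⟨v, hv, ?_⟩
    rw [Matrix.sub_mulVec, Algebra.algebraMap_eq_smul_one, Matrix.smul_mulVec,
      Matrix.one_mulVec, h, sub_self]

lemma spec_abs_le {n : ℕ} (K : Matrix (Fin n) (Fin n) ℝ) (r : ℝ) (u : Fin n → ℝ)
    (hr : 0 ≤ r) (hK : ∀ i j, 0 ≤ K i j) (hu : ∀ i, 0 ≤ u i)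
    (hKu : ∀ i, (K *ᵥ u) i ≤ r * u i)
    (hrow : ∀ i, u i = 0 → ∀ j, K i j = 0) :
    ∀ μ ∈ spectrum ℂ (K.map Complex.ofReal), ‖μ‖ ≤ r := by
  intro μ hμ
  obtain ⟨v, hv, hvec⟩ := (mem_spec_iff _ μ).mp hμ
  by_cases hμ0 : μ = 0
  · simp [hμ0, hr]
  -- entries where u vanishes have v = 0
  have hv0 : ∀ i, u i = 0 → v i = 0 := by
    intro i hui
    have h1 : (K.map Complex.ofReal *ᵥ v) i = μ * v i := by rw [hvec]; rfl
    have h2 : (K.map Complex.ofReal *ᵥ v) i = 0 := by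
      simp only [Matrix.mulVec, dotProduct, Matrix.map_apply]
      apply Finset.sum_eq_zero
      intro j _
      rw [hrow i hui j]
      simp
    rw [h2] at h1
    exact (mul_eq_zero.mp h1.symm).resolve_left hμ0
  -- the support is nonempty
  have hJ : ∃ i, u i ≠ 0 := by
    by_contra h
    push_neg at h
    apply hv
    funext i
    exact hv0 i (h i)
  set J : Finset (Fin n) := Finset.univ.filter (fun i => u i ≠ 0) with hJdef
  have hJne : J.Nonempty := by
    obtain ⟨i, hi⟩ := hJ
    exact ⟨i, by simp [hJdef, hi]⟩
  obtain ⟨i0, hi0J, hmax⟩ := J.exists_max_image (fun i => ‖v i‖ / u i) hJne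
  have hui0 : 0 < u i0 := by
    have : u i0 ≠ 0 := by simpa [hJdef] using hi0J
    exact lt_of_le_of_ne (hu i0) (Ne.symm this)
  set t : ℝ := ‖v i0‖ / u i0 with ht
  have htnn : 0 ≤ t := div_nonneg (norm_nonneg _) hui0.le
  have key : ∀ j, ‖v j‖ ≤ t * u j := by
    intro j
    by_cases huj : u j = 0
    · rw [hv0 j huj, huj] 
      simp
    · have hujpos : 0 < u j := lt_of_le_of_ne (hu j) (Ne.symm huj)
      have := hmax j (by simp [hJdef, huj])
      calc ‖v j‖ = (‖v j‖ / u j) * u j := by field_simp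
        _ ≤ t * u j := by exact mul_le_mul_of_nonneg_right this hujpos.le
  have hvi0 : 0 < ‖v i0‖ := by
    rcases eq_or_lt_of_le (norm_nonneg (v i0)) with h | h
    · exfalso
      apply hv
      have ht0 : t = 0 := by rw [ht, ← h]; simp
      funext j
      have := key j
      rw [ht0, zero_mul] at this
      exact norm_eq_zero.mp (le_antisymm this (norm_nonneg _))
    · exact h
  -- main chain
  have hchain : ‖μ‖ * ‖v i0‖ ≤ r * ‖v i0‖ := by
    have h1 : μ * v i0 = (K.map Complex.ofReal *ᵥ v) i0 := by rw [hvec]; rfl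
    calc ‖μ‖ * ‖v i0‖ = ‖μ * v i0‖ := (norm_mul _ _).symm
      _ = ‖∑ j, (K i0 j : ℂ) * v j‖ := by
          rw [h1]; rfl
      _ ≤ ∑ j, ‖(K i0 j : ℂ) * v j‖ := norm_sum_le _ _
      _ = ∑ j, K i0 j * ‖v j‖ := by
          apply Finset.sum_congr rfl
          intro j _
          rw [norm_mul, Complex.norm_real, Real.norm_of_nonneg (hK i0 j)]
      _ ≤ ∑ j, K i0 j * (t * u j) := by
          apply Finset.sum_le_sum
          intro j _
          exact mul_le_mul_of_nonneg_left (key j) (hK i0 j)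
      _ = t * (K *ᵥ u) i0 := by
          simp only [Matrix.mulVec, dotProduct, Finset.mul_sum]
          apply Finset.sum_congr rfl
          intro j _; ring
      _ ≤ t * (r * u i0) := mul_le_mul_of_nonneg_left (hKu i0) htnn
      _ = r * (t * u i0) := by ring
      _ = r * ‖v i0‖ := by rw [ht]; field_simp
  exact le_of_mul_le_mul_right hchain hvi0


lemma matrix_map_pow {n : ℕ} (K : Matrix (Fin n) (Fin n) ℝ) (k : ℕ) :
    (K.map Complex.ofReal) ^ k = (K ^ k).map Complex.ofReal := by
  have := map_pow (Complex.ofRealHom.mapMatrix (m := Fin n)) K k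
  exact this.symm

lemma matrix_map_inj {n : ℕ} {M N : Matrix (Fin n) (Fin n) ℝ}
    (h : M.map Complex.ofReal = N.map Complex.ofReal) : M = N := by
  funext i j
  have := congrFun (congrFun h i) j
  simpa [Matrix.map_apply] using this

lemma pow_entry_nonneg {n : ℕ} {K : Matrix (Fin n) (Fin n) ℝ}
    (hK : ∀ i j, 0 ≤ K i j) : ∀ k i j, 0 ≤ (K ^ k) i j := by
  intro k
  induction k with
  | zero => intro i j; by_cases h : i = j <;> simp [Matrix.one_apply, h]
  | succ m ih =>
    intro i j
    rw [pow_succ]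
    simp only [Matrix.mul_apply]
    exact Finset.sum_nonneg fun l _ => mul_nonneg (ih i l) (hK l j)

lemma matrix_map_mul' {n : ℕ} (M N : Matrix (Fin n) (Fin n) ℝ) :
    (M * N).map Complex.ofReal = M.map Complex.ofReal * N.map Complex.ofReal := by
  funext i j
  simp only [Matrix.map_apply, Matrix.mul_apply]
  push_cast
  rfl

lemma neumann {n : ℕ} (K : Matrix (Fin n) (Fin n) ℝ)
    (hK : ∀ i j, 0 ≤ K i j)
    (hspec : ∀ μ ∈ spectrum ℂ (K.map Complex.ofReal), ‖μ‖ < 1) :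
    ∃ W : Matrix (Fin n) (Fin n) ℝ, (1 - K) * W = 1 ∧ W * (1 - K) = 1 ∧ ∀ i j, 0 ≤ W i j := by
  set Mc : Matrix (Fin n) (Fin n) ℂ := K.map Complex.ofReal with hMc
  set φ := Matrix.toEuclideanCLM (𝕜 := ℂ) (n := Fin n) with hφ
  set a := φ Mc with ha
  have hspeceq : spectrum ℂ a = spectrum ℂ Mc := AlgEquiv.spectrum_eq φ Mc
  -- spectral radius < 1
  have hρ : spectralRadius ℂ a < 1 := by
    by_cases hemp : spectrum ℂ Mc = ∅
    · rw [spectralRadius, hspeceq, hemp]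
      simp
    · obtain ⟨z, hz, hzeq⟩ := spectrum.exists_nnnorm_eq_spectralRadius_of_nonempty
        (a := a) (by rw [hspeceq]; exact Set.nonempty_iff_ne_empty.mpr hemp)
      rw [← hzeq]
      rw [hspeceq] at hz
      have h1 : ‖z‖ < 1 := by
        exact hspec z hz
      rw [ENNReal.coe_lt_one_iff]
      exact_mod_cast h1
  -- geometric bound on ‖a^k‖
  obtain ⟨cE, hc1, hc2⟩ := exists_between hρ
  have hcE_ne : cE ≠ ⊤ := by
    intro h; rw [h] at hc2; exact (not_top_lt hc2).elim
  set c : ℝ := cE.toReal with hcdef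
  have hc0 : 0 ≤ c := ENNReal.toReal_nonneg
  have hclt1 : c < 1 := by
    rw [hcdef, ← ENNReal.toReal_one]
    exact ENNReal.toReal_lt_toReal hcE_ne ENNReal.one_ne_top |>.mpr hc2
  have hgel := spectrum.pow_norm_pow_one_div_tendsto_nhds_spectralRadius a
  have hev : ∀ᶠ k : ℕ in atTop, ENNReal.ofReal (‖a ^ k‖ ^ (1 / (k:ℝ))) < cE :=
    hgel.eventually_lt_const hc1
  have hev' : ∀ᶠ k : ℕ in atTop, ‖a ^ k‖ ≤ c ^ k := by
    obtain ⟨N, hN⟩ := eventually_atTop.mp hev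
    rw [eventually_atTop]
    refine ⟨max N 1, fun k hk => ?_⟩
    have hkN : N ≤ k := le_trans (le_max_left _ _) hk
    have hk1 : 1 ≤ k := le_trans (le_max_right _ _) hk
    have hknz : (k:ℝ) ≠ 0 := by positivity
    have h2 := hN k hkN
    have hulb : (0:ℝ) ≤ ‖a ^ k‖ ^ (1 / (k:ℝ)) := Real.rpow_nonneg (norm_nonneg _) _
    have hu : ‖a ^ k‖ ^ (1 / (k:ℝ)) < c := by
      rw [hcdef]
      rw [← ENNReal.ofReal_toReal hcE_ne] at h2
      exact (ENNReal.ofReal_lt_ofReal_iff_of_nonneg hulb).mp h2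
    have hxy : (‖a ^ k‖ ^ (1 / (k:ℝ))) ^ (k:ℝ) = ‖a ^ k‖ := by
      rw [← Real.rpow_mul (norm_nonneg _), one_div_mul_cancel hknz, Real.rpow_one]
    calc ‖a ^ k‖ = (‖a ^ k‖ ^ (1 / (k:ℝ))) ^ (k:ℝ) := hxy.symm
      _ ≤ c ^ (k:ℝ) := Real.rpow_le_rpow hulb hu.le (by positivity)
      _ = c ^ k := Real.rpow_natCast c k
  have hsum : Summable (fun k : ℕ => a ^ k) :=
    Summable.of_norm_bounded_eventually_nat (g := fun k => c ^ k)
      (summable_geometric_of_lt_one hc0 hclt1) hev'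
  set S := ∑' k : ℕ, a ^ k with hSdef
  have hSl : S = 1 + a * S := by
    conv_lhs => rw [hSdef, Summable.tsum_eq_zero_add hsum]
    rw [pow_zero]
    congr 1
    calc ∑' (b : ℕ), a ^ (b + 1) = ∑' (b : ℕ), a * a ^ b := by simp only [pow_succ']
      _ = a * S := by rw [hSdef]; exact hsum.tsum_mul_left a
  have hSr : S = 1 + S * a := by
    conv_lhs => rw [hSdef, Summable.tsum_eq_zero_add hsum]
    rw [pow_zero]
    congr 1
    calc ∑' (b : ℕ), a ^ (b + 1) = ∑' (b : ℕ), a ^ b * a := by simp only [pow_succ]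
      _ = S * a := by rw [hSdef]; exact hsum.tsum_mul_right a
  have hleft : (1 - a) * S = 1 := by
    calc (1 - a) * S = S - a * S := by rw [sub_mul, one_mul]
      _ = (1 + a * S) - a * S := by rw [← hSl]
      _ = 1 := add_sub_cancel_right _ _
  have hright : S * (1 - a) = 1 := by
    calc S * (1 - a) = S - S * a := by rw [mul_sub, mul_one]
      _ = (1 + S * a) - S * a := by rw [← hSr]
      _ = 1 := add_sub_cancel_right _ _
  -- transfer to matrices
  set ψ := (Matrix.toEuclideanCLM (𝕜 := ℂ) (n := Fin n)).symm with hψ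
  have hψa : ψ a = Mc := by rw [ha, hψ]; exact StarAlgEquiv.symm_apply_apply _ _
  have hψL : ∃ L : (EuclideanSpace ℂ (Fin n) →L[ℂ] EuclideanSpace ℂ (Fin n)) →ₗ[ℂ]
      Matrix (Fin n) (Fin n) ℂ, ⇑L = ⇑ψ := by
    exact ⟨{ toFun := ψ, map_add' := fun x y => map_add ψ x y,
             map_smul' := fun r x => map_smul ψ r x }, rfl⟩
  obtain ⟨L, hL⟩ := hψL
  have hψcont : Continuous ψ := by
    rw [← hL]; exact L.continuous_of_finiteDimensional
  have hψpow : ∀ k : ℕ, ψ (a ^ k) = Mc ^ k := by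
    intro k
    rw [ha, ← map_pow φ, hψ]
    exact StarAlgEquiv.symm_apply_apply _ _
  have hMS : HasSum (fun k : ℕ => Mc ^ k) (ψ S) := by
    have h := hsum.hasSum.map L.toAddMonoidHom (by
      rw [show ⇑L.toAddMonoidHom = ⇑L from rfl, hL]; exact hψcont)
    have e1 : (⇑L.toAddMonoidHom ∘ fun k : ℕ => a ^ k) = fun k : ℕ => Mc ^ k := by
      funext k
      show L (a ^ k) = Mc ^ k
      rw [show (⇑L : _ → _) = ⇑ψ from hL]
      exact hψpow k
    have e2 : L.toAddMonoidHom S = ψ S := by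
      show L S = ψ S
      rw [show (⇑L : _ → _) = ⇑ψ from hL]
    rwa [e1, e2] at h
  set Sm := ψ S with hSm
  have hmleft : (1 - Mc) * Sm = 1 := by
    calc (1 - Mc) * Sm = ψ (1 - a) * ψ S := by rw [map_sub ψ, _root_.map_one ψ, hψa]
      _ = ψ ((1 - a) * S) := (_root_.map_mul ψ _ _).symm
      _ = ψ 1 := by rw [hleft]
      _ = 1 := _root_.map_one ψ
  have hmright : Sm * (1 - Mc) = 1 := by
    calc Sm * (1 - Mc) = ψ S * ψ (1 - a) := by rw [map_sub ψ, _root_.map_one ψ, hψa]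
      _ = ψ (S * (1 - a)) := (_root_.map_mul ψ _ _).symm
      _ = ψ 1 := by rw [hright]
      _ = 1 := _root_.map_one ψ
  -- entrywise
  have hentry : ∀ i j, HasSum (fun k : ℕ => ((K ^ k) i j : ℂ)) (Sm i j) := by
    intro i j
    have hE : ∃ E : Matrix (Fin n) (Fin n) ℂ →ₗ[ℂ] ℂ, ∀ M, E M = M i j :=
      ⟨{ toFun := fun M => M i j, map_add' := fun x y => rfl, map_smul' := fun r x => rfl },
        fun M => rfl⟩
    obtain ⟨E, hEap⟩ := hE
    have h := hMS.map E.toAddMonoidHom (by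
      exact E.continuous_of_finiteDimensional)
    have e1 : (⇑E.toAddMonoidHom ∘ fun k : ℕ => Mc ^ k) = fun k : ℕ => ((K ^ k) i j : ℂ) := by
      funext k
      show E (Mc ^ k) = _
      rw [hEap, hMc, matrix_map_pow]
      rfl
    have e2 : E.toAddMonoidHom Sm = Sm i j := hEap Sm
    rwa [e1, e2] at h
  set W : Matrix (Fin n) (Fin n) ℝ := fun i j => ∑' k : ℕ, (K ^ k) i j with hW
  have hSmW : Sm = W.map Complex.ofReal := by
    funext i j
    have h1 := hentry i j
    have h2 : Summable fun k : ℕ => (K ^ k) i j := Complex.summable_ofReal.mp h1.summable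
    have h3 : HasSum (fun k : ℕ => ((K ^ k) i j : ℂ)) ((∑' k : ℕ, (K ^ k) i j : ℝ) : ℂ) := by
      rw [Complex.ofReal_tsum]
      exact (Complex.summable_ofReal.mpr h2).hasSum
    exact h1.unique h3
  have h1 : (1 - K).map Complex.ofReal = 1 - Mc := by
    rw [hMc]
    funext i j
    by_cases h : i = j <;>
      simp [Matrix.map_apply, Matrix.sub_apply, Matrix.one_apply, h]
  have hone : (1 : Matrix (Fin n) (Fin n) ℝ).map Complex.ofReal = 1 := by
    funext i j
    by_cases h : i = j <;> simp [Matrix.map_apply, Matrix.one_apply, h]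
  refine ⟨W, ?_, ?_, ?_⟩
  · apply matrix_map_inj
    rw [matrix_map_mul', h1, ← hSmW, hmleft, hone]
  · apply matrix_map_inj
    rw [matrix_map_mul', h1, ← hSmW, hmright, hone]
  · intro i j
    rw [hW]
    exact tsum_nonneg fun k => pow_entry_nonneg hK k i j

lemma neg_inv_nonneg {n : ℕ} (hn : 0 < n) (V : Matrix (Fin n) (Fin n) ℝ)
    (hVmetzler : IsMetzler V) (hVhurwitz : IsHurwitz V) :
    ∃ N : Matrix (Fin n) (Fin n) ℝ, (∀ i j, 0 ≤ N i j) ∧ (-V) * N = 1 ∧ N * (-V) = 1 := by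
  classical
  set Vc : Matrix (Fin n) (Fin n) ℂ := V.map Complex.ofReal with hVc
  set aV := Matrix.toEuclideanCLM (𝕜 := ℂ) (n := Fin n) Vc with haV
  have hspeceq : spectrum ℂ aV = spectrum ℂ Vc := AlgEquiv.spectrum_eq _ _
  have hcomp : IsCompact (spectrum ℂ aV) := spectrum.isCompact aV
  -- nonempty spectrum
  haveI : Nonempty (Fin n) := ⟨⟨0, hn⟩⟩
  haveI : Nontrivial (EuclideanSpace ℂ (Fin n)) := inferInstance
  haveI : Nontrivial (EuclideanSpace ℂ (Fin n) →L[ℂ] EuclideanSpace ℂ (Fin n)) := by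
    obtain ⟨x, hx⟩ := exists_ne (0 : EuclideanSpace ℂ (Fin n))
    refine ⟨1, 0, fun h => hx ?_⟩
    simpa using ContinuousLinearMap.ext_iff.1 h x
  have hne : (spectrum ℂ aV).Nonempty := spectrum.nonempty aV
  obtain ⟨μ0, hμ0, hmax⟩ := hcomp.exists_isMaxOn hne Complex.continuous_re.continuousOn
  have hm : μ0.re < 0 := hVhurwitz μ0 (hspeceq ▸ hμ0)
  set m : ℝ := μ0.re with hmdef
  clear_value m
  obtain ⟨R, hR⟩ := isBounded_iff_forall_norm_le.mp hcomp.isBounded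
  have hR0 : 0 ≤ R := le_trans (norm_nonneg μ0) (hR μ0 hμ0)
  -- the shift
  set s : ℝ := 1 + R^2 / (2 * (-m)) + ∑ i, |V i i| with hsdef
  clear_value s
  have hterm2 : 0 ≤ R^2 / (2 * (-m)) := div_nonneg (sq_nonneg R) (by linarith)
  have hterm3 : 0 ≤ ∑ i, |V i i| := Finset.sum_nonneg fun i _ => abs_nonneg _
  have hs_pos : 0 < s := by rw [hsdef]; linarith
  have hs_ne : s ≠ 0 := ne_of_gt hs_pos
  have hsV : ∀ i, 0 ≤ s + V i i := by
    intro i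
    have h1 : |V i i| ≤ ∑ j, |V j j| :=
      Finset.single_le_sum (f := fun j => |V j j|) (fun j _ => abs_nonneg _) (Finset.mem_univ i)
    have h2 : -(V i i) ≤ |V i i| := neg_le_abs _
    rw [hsdef]; linarith
  have hskey : ∀ μ ∈ spectrum ℂ Vc, ‖(s:ℂ) + μ‖ < s := by
    intro μ hμ
    have hre : μ.re ≤ m := by
      rw [hmdef]
      exact hmax (show μ ∈ spectrum ℂ aV by rw [hspeceq]; exact hμ)
    have habs : ‖μ‖ ≤ R := by
      have := hR μ (hspeceq ▸ hμ); exact this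
    have e1 : (‖(s:ℂ) + μ‖)^2 = (s + μ.re)^2 + μ.im^2 := by
      rw [Complex.sq_norm, Complex.normSq_apply]
      simp only [Complex.add_re, Complex.add_im, Complex.ofReal_re, Complex.ofReal_im, zero_add]
      ring
    have e2 : (‖μ‖)^2 = μ.re^2 + μ.im^2 := by
      rw [Complex.sq_norm, Complex.normSq_apply]; ring
    have hs_big : R^2 < 2 * s * (-m) := by
      have h2m : (0:ℝ) < 2 * (-m) := by linarith
      have h4 : R^2 / (2 * (-m)) * (2 * (-m)) = R^2 := div_mul_cancel₀ _ (ne_of_gt h2m)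
      have h5 : 1 + R^2 / (2 * (-m)) ≤ s := by rw [hsdef]; linarith
      nlinarith [mul_le_mul_of_nonneg_right h5 h2m.le]
    have habs2 : (‖μ‖)^2 ≤ R^2 := by
      nlinarith [norm_nonneg μ]
    nlinarith [norm_nonneg ((s:ℂ) + μ), e1, e2, habs2, hre, hm, hs_pos]
  -- B = s•1 + V, K = s⁻¹ • B
  set B : Matrix (Fin n) (Fin n) ℝ := s • (1 : Matrix (Fin n) (Fin n) ℝ) + V with hB
  set K : Matrix (Fin n) (Fin n) ℝ := s⁻¹ • B with hKdef
  have hKnn : ∀ i j, 0 ≤ K i j := by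
    intro i j
    have hKe : K i j = s⁻¹ * (s * (if i = j then 1 else 0) + V i j) := by
      rw [hKdef, hB]
      simp [Matrix.smul_apply, Matrix.add_apply, Matrix.one_apply]
    rw [hKe]
    by_cases h : i = j
    · subst h
      rw [if_pos rfl, mul_one]
      exact mul_nonneg (inv_nonneg.mpr hs_pos.le) (hsV i)
    · rw [if_neg h, mul_zero, zero_add]
      exact mul_nonneg (inv_nonneg.mpr hs_pos.le) (hVmetzler i j h)
  have hBc : B.map Complex.ofReal = (s:ℂ) • 1 + Vc := by
    funext i j
    by_cases h : i = j <;>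
      simp [hB, hVc, Matrix.map_apply, Matrix.add_apply, Matrix.smul_apply, Matrix.one_apply, h]
  have hKc : K.map Complex.ofReal = ((s:ℝ)⁻¹ : ℂ) • (B.map Complex.ofReal) := by
    funext i j
    simp [hKdef, Matrix.map_apply, Matrix.smul_apply]
  have hspecK : ∀ μ ∈ spectrum ℂ (K.map Complex.ofReal), ‖μ‖ < 1 := by
    intro μ hμ
    obtain ⟨v, hv, hvec⟩ := (mem_spec_iff _ μ).mp hμ
    rw [hKc] at hvec
    have hvec2 : (B.map Complex.ofReal) *ᵥ v = ((s:ℂ) * μ) • v := by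
      have h1 : (((s:ℝ)⁻¹ : ℂ) • (B.map Complex.ofReal)) *ᵥ v
          = ((s:ℝ)⁻¹ : ℂ) • ((B.map Complex.ofReal) *ᵥ v) := Matrix.smul_mulVec _ _ _
      rw [h1] at hvec
      have hs0 : ((s:ℝ):ℂ) ≠ 0 := by exact_mod_cast hs_ne
      calc (B.map Complex.ofReal) *ᵥ v
          = ((s:ℝ):ℂ) • (((s:ℝ)⁻¹ : ℂ) • ((B.map Complex.ofReal) *ᵥ v)) := by
            rw [smul_smul, mul_inv_cancel₀ hs0, one_smul]
        _ = ((s:ℝ):ℂ) • (μ • v) := by rw [hvec]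
        _ = ((s:ℂ) * μ) • v := by rw [smul_smul]
    have hvec3 : Vc *ᵥ v = ((s:ℂ) * μ - s) • v := by
      rw [hBc] at hvec2
      have h1 : ((s:ℂ) • (1 : Matrix (Fin n) (Fin n) ℂ) + Vc) *ᵥ v
          = (s:ℂ) • v + Vc *ᵥ v := by
        rw [Matrix.add_mulVec, Matrix.smul_mulVec, Matrix.one_mulVec]
      rw [h1] at hvec2
      have := sub_eq_of_eq_add' hvec2.symm
      rw [← this, sub_smul]
    have hmem : (s:ℂ) * μ - s ∈ spectrum ℂ Vc := (mem_spec_iff _ _).mpr ⟨v, hv, hvec3⟩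
    have := hskey _ hmem
    have he : (s:ℂ) + ((s:ℂ) * μ - s) = (s:ℂ) * μ := by ring
    rw [he] at this
    rw [norm_mul, Complex.norm_real, Real.norm_eq_abs, abs_of_pos hs_pos] at this
    have h9 : s * ‖μ‖ < s * 1 := by rw [mul_one]; exact this
    exact (mul_lt_mul_iff_right₀ hs_pos).mp h9
  obtain ⟨W, hWl, hWr, hWnn⟩ := neumann K hKnn hspecK
  have h1K : (1 : Matrix (Fin n) (Fin n) ℝ) - K = s⁻¹ • (-V) := by
    rw [hKdef, hB, smul_add, smul_smul, inv_mul_cancel₀ hs_ne, one_smul, smul_neg]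
    abel
  refine ⟨s⁻¹ • W, ?_, ?_, ?_⟩
  · intro i j
    simp only [Matrix.smul_apply, smul_eq_mul]
    exact mul_nonneg (inv_nonneg.mpr hs_pos.le) (hWnn i j)
  · rw [Matrix.mul_smul, ← Matrix.smul_mul, ← h1K]
    exact hWl
  · rw [Matrix.smul_mul, ← Matrix.mul_smul, ← h1K]
    exact hWr

lemma mulVec_pos {n : ℕ} (N M : Matrix (Fin n) (Fin n) ℝ)
    (hN : ∀ i j, 0 ≤ N i j) (hNM : N * M = 1)
    (x : Fin n → ℝ) (hx : ∀ i, 0 < x i) : ∀ i, 0 < (N *ᵥ x) i := by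
  intro i
  have hrow : ∃ j, N i j ≠ 0 := by
    by_contra h
    push_neg at h
    have h1 : (N * M) i i = 0 := by
      simp [Matrix.mul_apply, h]
    rw [hNM] at h1
    simp [Matrix.one_apply] at h1
  obtain ⟨j0, hj0⟩ := hrow
  have hj0' : 0 < N i j0 := lt_of_le_of_ne (hN i j0) (Ne.symm hj0)
  show 0 < ∑ j, N i j * x j
  exact Finset.sum_pos' (fun j _ => mul_nonneg (hN i j) (hx j).le)
    ⟨j0, Finset.mem_univ _, mul_pos hj0' (hx j0)⟩

lemma bddAbove_moduli {n : ℕ} (A : Matrix (Fin n) (Fin n) ℝ) :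
    BddAbove {x : ℝ | ∃ μ ∈ spectrum ℂ (A.map Complex.ofReal), x = ‖μ‖} := by
  have hset : {x : ℝ | ∃ μ ∈ spectrum ℂ (A.map Complex.ofReal), x = ‖μ‖}
      = (fun z : ℂ => ‖z‖) '' (spectrum ℂ (A.map Complex.ofReal)) := by
    ext x
    constructor
    · rintro ⟨μ, h, e⟩; exact ⟨μ, h, e.symm⟩
    · rintro ⟨μ, h, e⟩; exact ⟨μ, h, e.symm⟩
  rw [hset, ← AlgEquiv.spectrum_eq (Matrix.toEuclideanCLM (𝕜 := ℂ) (n := Fin n))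
    (A.map Complex.ofReal)]
  exact ((spectrum.isCompact _).image continuous_norm).bddAbove

lemma specRad_nonneg {n : ℕ} (A : Matrix (Fin n) (Fin n) ℝ) : 0 ≤ specRad A := by
  apply Real.sSup_nonneg
  rintro x ⟨μ, _, rfl⟩
  exact norm_nonneg μ

/-- `ρ(F V⁻¹) = inf { r > 0 : ∃ w > 0 with (F + rV) w ≤ 0 entrywise }`. -/
theorem specRad_eq_sInf_exists_pos_vec_le {n : ℕ} (F V : Matrix (Fin n) (Fin n) ℝ)
    (hF : ∀ i j, 0 ≤ F i j) (hVmetzler : IsMetzler V) (hVhurwitz : IsHurwitz V) :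
    specRad (F * V⁻¹) =
      sInf {r : ℝ | 0 < r ∧ ∃ w : Fin n → ℝ, (∀ i, 0 < w i) ∧
        ∀ i, ((F + r • V) *ᵥ w) i ≤ 0} := by
  classical
  rcases Nat.eq_zero_or_pos n with hn | hn
  · subst hn
    have h1 : specRad (F * V⁻¹) = 0 := by
      rw [specRad]
      have he : {x : ℝ | ∃ μ ∈ spectrum ℂ ((F * V⁻¹).map Complex.ofReal), x = ‖μ‖}
          = (∅ : Set ℝ) := by
        rw [Set.eq_empty_iff_forall_notMem]
        rintro x ⟨μ, hμ, _⟩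
        exact (spectrum.mem_iff.mp hμ) (isUnit_of_subsingleton _)
      rw [he, Real.sSup_empty]
    have h2 : {r : ℝ | 0 < r ∧ ∃ w : Fin 0 → ℝ, (∀ i, 0 < w i) ∧
        ∀ i, ((F + r • V) *ᵥ w) i ≤ 0} = Set.Ioi (0:ℝ) := by
      ext r
      constructor
      · rintro ⟨hr, _⟩; exact hr
      · intro hr; exact ⟨hr, fun i => i.elim0, fun i => i.elim0, fun i => i.elim0⟩
    rw [h1, h2, csInf_Ioi]
  -- main case
  obtain ⟨N, hNnn, hVN1, hNV1⟩ := neg_inv_nonneg hn V hVmetzler hVhurwitz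
  have hVN : V * N = -1 := by
    have h := hVN1
    rw [Matrix.neg_mul] at h
    exact neg_eq_iff_eq_neg.mp h
  have hNV : N * V = -1 := by
    have h := hNV1
    rw [Matrix.mul_neg] at h
    exact neg_eq_iff_eq_neg.mp h
  have hVinv : V⁻¹ = -N := by
    apply Matrix.inv_eq_right_inv
    rw [Matrix.mul_neg, hVN, neg_neg]
  set K : Matrix (Fin n) (Fin n) ℝ := F * N with hKdef
  have hKnn : ∀ i j, 0 ≤ K i j := by
    intro i j
    rw [hKdef, Matrix.mul_apply]
    exact Finset.sum_nonneg fun l _ => mul_nonneg (hF i l) (hNnn l j)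
  have hFVK : F * V⁻¹ = -K := by rw [hVinv, Matrix.mul_neg, hKdef]
  have hFVc : (F * V⁻¹).map Complex.ofReal = -(K.map Complex.ofReal) := by
    rw [hFVK]
    funext i j
    simp [Matrix.map_apply, Matrix.neg_apply]
  set ρ := specRad (F * V⁻¹) with hρdef
  have hρub : ∀ μ ∈ spectrum ℂ ((F * V⁻¹).map Complex.ofReal), ‖μ‖ ≤ ρ := by
    intro μ hμ
    rw [hρdef, specRad]
    exact le_csSup (bddAbove_moduli _) ⟨μ, hμ, rfl⟩
  have hρ0 : 0 ≤ ρ := by rw [hρdef]; exact specRad_nonneg _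
  set S := {r : ℝ | 0 < r ∧ ∃ w : Fin n → ℝ, (∀ i, 0 < w i) ∧
      ∀ i, ((F + r • V) *ᵥ w) i ≤ 0} with hSdef
  -- STEP C : every element of S is ≥ ρ
  have hC : ∀ r ∈ S, ρ ≤ r := by
    rintro r ⟨hr, w, hw, hineq⟩
    set u : Fin n → ℝ := fun i => -((V *ᵥ w) i) with hudef
    have hFw_nn : ∀ i, 0 ≤ (F *ᵥ w) i := by
      intro i
      show 0 ≤ ∑ j, F i j * w j
      exact Finset.sum_nonneg fun j _ => mul_nonneg (hF i j) (hw j).le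
    have hFw_le : ∀ i, (F *ᵥ w) i ≤ r * u i := by
      intro i
      have h := hineq i
      rw [Matrix.add_mulVec, Matrix.smul_mulVec] at h
      have h2 : (F *ᵥ w) i + r * (V *ᵥ w) i ≤ 0 := h
      have h3 : u i = -((V *ᵥ w) i) := rfl
      rw [h3]
      linarith
    have hu_nn : ∀ i, 0 ≤ u i := by
      intro i
      by_contra hneg
      push_neg at hneg
      have h1 := hFw_le i
      nlinarith [hFw_nn i]
    have hNu : N *ᵥ u = w := by
      have h1 : u = -(V *ᵥ w) := by funext i; rfl
      rw [h1, Matrix.mulVec_neg, Matrix.mulVec_mulVec, hNV, Matrix.neg_mulVec,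
        Matrix.one_mulVec, neg_neg]
    have hKu : K *ᵥ u = F *ᵥ w := by
      rw [hKdef, ← Matrix.mulVec_mulVec, hNu]
    have hKrow : ∀ i, u i = 0 → ∀ j, K i j = 0 := by
      intro i hui j
      have hFwi : (F *ᵥ w) i = 0 := by
        have h1 := hFw_le i
        rw [hui, mul_zero] at h1
        exact le_antisymm h1 (hFw_nn i)
      have hFrow : ∀ l, F i l = 0 := by
        have hsum : ∑ l, F i l * w l = 0 := hFwi
        have h2 := (Finset.sum_eq_zero_iff_of_nonneg
          (fun l _ => mul_nonneg (hF i l) (hw l).le)).mp hsum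
        intro l
        have h3 := h2 l (Finset.mem_univ l)
        rcases mul_eq_zero.mp h3 with h4 | h4
        · exact h4
        · exact absurd h4 (ne_of_gt (hw l))
      rw [hKdef, Matrix.mul_apply]
      apply Finset.sum_eq_zero
      intro l _
      rw [hFrow l, zero_mul]
    have habs := spec_abs_le K r u hr.le hKnn hu_nn
      (fun i => by rw [hKu]; exact hFw_le i) hKrow
    rw [hρdef, specRad]
    apply Real.sSup_le _ hr.le
    rintro x ⟨μ, hμ, rfl⟩
    rw [hFVc] at hμ
    obtain ⟨v, hv, hvec⟩ := (mem_spec_iff _ μ).mp hμ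
    have hvec2 : (K.map Complex.ofReal) *ᵥ v = (-μ) • v := by
      have h1 : -((K.map Complex.ofReal) *ᵥ v) = μ • v := by
        rw [← Matrix.neg_mulVec]; exact hvec
      have h2 : (K.map Complex.ofReal) *ᵥ v = -(μ • v) := by
        rw [← h1, neg_neg]
      rw [h2, neg_smul]
    have h5 := habs (-μ) ((mem_spec_iff _ _).mpr ⟨v, hv, hvec2⟩)
    rwa [norm_neg] at h5
  -- STEP D : everything above ρ is in S
  have hD : ∀ r, ρ < r → r ∈ S := by
    intro r hrρ
    have hr0 : 0 < r := lt_of_le_of_lt hρ0 hrρ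
    have hr_ne : r ≠ 0 := ne_of_gt hr0
    set A : Matrix (Fin n) (Fin n) ℝ := r⁻¹ • K with hAdef
    have hAnn : ∀ i j, 0 ≤ A i j := by
      intro i j
      have h1 : A i j = r⁻¹ * K i j := rfl
      rw [h1]
      exact mul_nonneg (inv_nonneg.mpr hr0.le) (hKnn i j)
    have hr0c : ((r:ℝ):ℂ) ≠ 0 := by exact_mod_cast hr_ne
    have hAc : A.map Complex.ofReal = ((r:ℂ))⁻¹ • (K.map Complex.ofReal) := by
      funext i j
      show ((r⁻¹ * K i j : ℝ) : ℂ) = ((r:ℂ))⁻¹ * ((K i j : ℝ) : ℂ)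
      push_cast
      ring
    have hspecA : ∀ μ ∈ spectrum ℂ (A.map Complex.ofReal), ‖μ‖ < 1 := by
      intro μ hμ
      rw [hAc] at hμ
      obtain ⟨v, hv, hvec⟩ := (mem_spec_iff _ μ).mp hμ
      have hvec2 : (K.map Complex.ofReal) *ᵥ v = ((r:ℂ) * μ) • v := by
        have h1 : (((r:ℂ))⁻¹ • (K.map Complex.ofReal)) *ᵥ v
            = ((r:ℂ))⁻¹ • ((K.map Complex.ofReal) *ᵥ v) := Matrix.smul_mulVec _ _ _
        rw [h1] at hvec
        calc (K.map Complex.ofReal) *ᵥ v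
            = (r:ℂ) • (((r:ℂ))⁻¹ • ((K.map Complex.ofReal) *ᵥ v)) := by
              rw [smul_smul, mul_inv_cancel₀ hr0c, one_smul]
          _ = (r:ℂ) • (μ • v) := by rw [hvec]
          _ = ((r:ℂ) * μ) • v := by rw [smul_smul]
      have hvec3 : ((F * V⁻¹).map Complex.ofReal) *ᵥ v = (-((r:ℂ) * μ)) • v := by
        rw [hFVc, Matrix.neg_mulVec, hvec2, neg_smul]
      have hle := hρub _ ((mem_spec_iff _ _).mpr ⟨v, hv, hvec3⟩)
      rw [norm_neg, norm_mul, Complex.norm_real,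
        Real.norm_eq_abs, abs_of_pos hr0] at hle
      have h6 : r * ‖μ‖ < r * 1 := by
        rw [mul_one]
        exact lt_of_le_of_lt hle hrρ
      exact (mul_lt_mul_iff_right₀ hr0).mp h6
    obtain ⟨W, hWl, hWr, hWnn⟩ := neumann A hAnn hspecA
    set e : Fin n → ℝ := fun _ => 1 with hedef
    set x : Fin n → ℝ := W *ᵥ e with hxdef
    have hWdiag : ∀ i, 1 ≤ W i i := by
      intro i
      have hW1 : W = 1 + A * W := by
        have h := hWl
        rw [Matrix.sub_mul, Matrix.one_mul] at h
        exact sub_eq_iff_eq_add.mp h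
      have hAW : 0 ≤ (A * W) i i := by
        rw [Matrix.mul_apply]
        exact Finset.sum_nonneg fun l _ => mul_nonneg (hAnn i l) (hWnn l i)
      have h7 : W i i = 1 + (A * W) i i := by
        calc W i i = (1 + A * W) i i := by rw [← hW1]
          _ = 1 + (A * W) i i := by simp [Matrix.add_apply, Matrix.one_apply]
      linarith
    have hx1 : ∀ i, 0 < x i := by
      intro i
      have h8 : x i = ∑ j, W i j := by
        rw [hxdef]
        show ∑ j, W i j * e j = ∑ j, W i j
        simp [hedef]
      rw [h8]
      have h9 := Finset.single_le_sum (f := fun j => W i j)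
        (fun j _ => hWnn i j) (Finset.mem_univ i)
      linarith [hWdiag i]
    set w : Fin n → ℝ := N *ᵥ x with hwdef
    have hw : ∀ i, 0 < w i := mulVec_pos N (-V) hNnn hNV1 x hx1
    refine ⟨hr0, w, hw, ?_⟩
    have hmat : (F + r • V) * N = (-r) • ((1 : Matrix (Fin n) (Fin n) ℝ) - A) := by
      have h10 : (F + r • V) * N = F * N + r • (V * N) := by
        rw [Matrix.add_mul, Matrix.smul_mul]
      rw [h10, hVN, ← hKdef, hAdef, smul_sub, smul_smul, neg_mul,
        mul_inv_cancel₀ hr_ne]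
      rw [neg_smul, neg_smul, one_smul, sub_neg_eq_add, smul_neg]
      abel
    intro i
    have hcomp : (F + r • V) *ᵥ w = ((-r) • ((1 : Matrix (Fin n) (Fin n) ℝ) - A)) *ᵥ x := by
      rw [hwdef, Matrix.mulVec_mulVec, hmat]
    have hval : ((F + r • V) *ᵥ w) i = -r := by
      rw [hcomp, hxdef, Matrix.smul_mulVec, Matrix.mulVec_mulVec, hWl,
        Matrix.one_mulVec]
      show -r * e i = -r
      simp [hedef]
    rw [hval]
    linarith
  -- conclusion
  have hSne : S.Nonempty := ⟨ρ + 1, hD (ρ + 1) (lt_add_one ρ)⟩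
  have hbdd_below : BddBelow S := ⟨0, fun r hr => (hr.1).le⟩
  apply le_antisymm
  · exact le_csInf hSne hC
  · apply le_of_forall_pos_le_add
    intro ε hε
    exact csInf_le hbdd_below (hD (ρ + ε) (by linarith))
end
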